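/- arXiv:1307.7253 — 6 statements merged into one kernel-verified Lean document; each statement's English description precedes it below -/
import Mathlib

section
/- For every integer m ≥ 1 and every Borel set A ⊆ E ∖ {0}, M^{<m>}(A) = (1/(m−1)!) ∫_0^1 M(t^{−1}A) (−ln t)^{m−1} dt, the equality holding in [0,∞]. -/
open MeasureTheory Real ENNReal

lemma max_minorant {α : Type*} [MeasurableSpace α] (μ : Measure α) [IsFiniteMeasure μ]
    {f g : α → ℝ≥0∞} (hg : Measurable g)
    (hset : ∀ s, ∫⁻ a in s, f a ∂μ = ∫⁻ a in s, g a ∂μ)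
    (h : α → ℝ≥0∞) (hh : Measurable h) (hhf : h ≤ f) : h ≤ᵐ[μ] g := by
  have key : ∀ n : ℕ, ∀ᵐ a ∂μ, min (h a) n ≤ g a := by
    intro n
    set s : Set α := {a | g a < min (h a) n} with hs
    have hsm : MeasurableSet s := measurableSet_lt hg (hh.min measurable_const)
    have hfin : ∫⁻ a in s, min (h a) n ∂μ ≠ ∞ := by
      refine ne_of_lt (lt_of_le_of_lt (lintegral_mono fun a => min_le_right _ _) ?_)
      simp only [lintegral_const]
      exact ENNReal.mul_lt_top (by simp) (measure_lt_top _ _)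
    have hgle : ∫⁻ a in s, min (h a) n ∂μ ≤ ∫⁻ a in s, g a ∂μ := by
      rw [← hset s]
      exact lintegral_mono fun a => le_trans (min_le_left _ _) (hhf a)
    have hglemin : (fun a => g a) ≤ᵐ[μ.restrict s] fun a => min (h a) n :=
      (ae_restrict_iff' hsm).2 (ae_of_all _ fun a ha => le_of_lt ha)
    have hgfin : ∫⁻ a in s, g a ∂μ ≠ ∞ :=
      ne_of_lt (lt_of_le_of_lt (lintegral_mono_ae hglemin) hfin.lt_top)
    have heq : ∫⁻ a in s, min (h a) n ∂μ = ∫⁻ a in s, g a ∂μ :=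
      le_antisymm hgle (lintegral_mono_ae hglemin)
    have hsub : ∫⁻ a in s, (min (h a) n - g a) ∂μ = 0 := by
      rw [lintegral_sub hg hgfin hglemin, heq, tsub_self]
    have hz : ∀ᵐ a ∂μ.restrict s, min (h a) n - g a = 0 :=
      (lintegral_eq_zero_iff ((hh.min measurable_const).sub hg)).mp hsub
    have hfalse : ∀ᵐ _a ∂μ.restrict s, False := by
      filter_upwards [hz, ae_restrict_mem hsm] with a hza h1a
      exact absurd (tsub_eq_zero_iff_le.mp hza) (not_le_of_gt h1a)
    have hres : μ.restrict s Set.univ = 0 := by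
      have := ae_iff.mp hfalse
      simpa using this
    have hs0 : μ s = 0 := by rwa [Measure.restrict_apply_univ] at hres
    filter_upwards [measure_eq_zero_iff_ae_notMem.mp hs0] with a ha
    exact le_of_not_gt ha
  rw [Filter.EventuallyLE]
  filter_upwards [(ae_all_iff).2 key] with a ha
  rcases eq_or_ne (h a) ∞ with htop | hne
  · rcases eq_or_ne (g a) ∞ with hgt | hgne
    · exact hgt ▸ le_top
    · obtain ⟨n, hn⟩ := ENNReal.exists_nat_gt hgne
      have h2 : (n : ℝ≥0∞) ≤ g a := by
        have h3 := ha n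
        rwa [htop, min_eq_right le_top] at h3
      exact absurd h2 (not_le_of_gt hn)
  · obtain ⟨n, hn⟩ := ENNReal.exists_nat_gt hne
    have := ha n
    rwa [min_eq_left (le_of_lt hn)] at this

lemma lintegral_mul_eq_of_max {α : Type*} [MeasurableSpace α] {μ : Measure α}
    {f g : α → ℝ≥0∞} (hg : Measurable g) (hgf : g ≤ f)
    (hmax : ∀ h : α → ℝ≥0∞, Measurable h → h ≤ f → h ≤ᵐ[μ] g)
    {k : α → ℝ≥0∞} (hk : Measurable k) (hkfin : ∀ x, k x ≠ ∞) :
    ∫⁻ x, f x * k x ∂μ = ∫⁻ x, g x * k x ∂μ := by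
  refine le_antisymm ?_ (lintegral_mono fun x => mul_le_mul_left (hgf x) _)
  obtain ⟨h, hhm, hhle, hheq⟩ := exists_measurable_le_lintegral_eq μ (fun x => f x * k x)
  rw [hheq]
  set h' : α → ℝ≥0∞ := fun x => if k x = 0 then 0 else h x / k x with hh'
  have hh'm : Measurable h' := Measurable.ite (hk (measurableSet_singleton 0))
    measurable_const (hhm.div hk)
  have hh'f : h' ≤ f := by
    intro x
    by_cases hx : k x = 0
    · simp [hh', hx]
    · simp only [hh', hx, if_false]
      rw [ENNReal.div_le_iff hx (hkfin x)]
      exact hhle x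
  have hae : h ≤ᵐ[μ] fun x => g x * k x := by
    filter_upwards [hmax h' hh'm hh'f] with x hx
    by_cases hk0 : k x = 0
    · have : h x ≤ f x * k x := hhle x
      rw [hk0, mul_zero] at this
      simpa [hk0] using this
    · have : h x = h' x * k x := by
        simp only [hh', hk0, if_false]
        rw [ENNReal.div_mul_cancel hk0 (hkfin x)]
      rw [this]
      exact mul_le_mul_left hx _
  exact lintegral_mono_ae hae

lemma log_kernel_integral {u : ℝ} (hu0 : 0 < u) (hu1 : u < 1) {m : ℕ} (hm : 1 ≤ m) :
    ∫⁻ t in Set.Ioo u 1, ENNReal.ofReal (t⁻¹ * (Real.log t - Real.log u) ^ (m - 1)) =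
      ENNReal.ofReal ((-Real.log u) ^ m / m) := by
  have hmR : (m : ℝ) ≠ 0 := Nat.cast_ne_zero.mpr (by omega)
  set F : ℝ → ℝ := fun t => t⁻¹ * (Real.log t - Real.log u) ^ (m - 1) with hF
  have hint : IntervalIntegrable F volume u 1 := by
    apply ContinuousOn.intervalIntegrable
    rw [Set.uIcc_of_le hu1.le]
    have hsub : Set.Icc u 1 ⊆ {(0:ℝ)}ᶜ := fun x hx => ne_of_gt (lt_of_lt_of_le hu0 hx.1)
    exact ((continuousOn_inv₀.mono hsub).mul
      (((Real.continuousOn_log.mono hsub).sub continuousOn_const).pow _))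
  have hderiv : ∀ x ∈ Set.uIcc u 1,
      HasDerivAt (fun t => (Real.log t - Real.log u) ^ m / m) (F x) x := by
    intro x hx
    rw [Set.uIcc_of_le hu1.le] at hx
    have hxpos : 0 < x := lt_of_lt_of_le hu0 hx.1
    have h1 : HasDerivAt (fun t => Real.log t - Real.log u) x⁻¹ x :=
      (Real.hasDerivAt_log (ne_of_gt hxpos)).sub_const _
    have h3 := (h1.pow m).div_const (m : ℝ)
    convert h3 using 1
    show x⁻¹ * (Real.log x - Real.log u) ^ (m - 1) = _
    rw [eq_div_iff hmR]
    ring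
    all_goals rfl
  have hcalc : ∫ t in u..1, F t = (-Real.log u) ^ m / m := by
    rw [intervalIntegral.integral_eq_sub_of_hasDerivAt hderiv hint]
    simp [Real.log_one, zero_pow (by omega : m ≠ 0)]
  have hnn : 0 ≤ᵐ[volume.restrict (Set.Ioc u 1)] F := by
    refine (ae_restrict_iff' measurableSet_Ioc).2 (ae_of_all _ fun t ht => ?_)
    have htpos : 0 < t := lt_trans hu0 ht.1
    have hlog : Real.log u ≤ Real.log t := Real.log_le_log hu0 ht.1.le
    have h1 : (0:ℝ) ≤ t⁻¹ := inv_nonneg.mpr htpos.le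
    have h2 : (0:ℝ) ≤ (Real.log t - Real.log u) ^ (m-1) := pow_nonneg (by linarith) _
    exact mul_nonneg h1 h2
  have hint2 : Integrable F (volume.restrict (Set.Ioc u 1)) :=
    (intervalIntegrable_iff_integrableOn_Ioc_of_le hu1.le).mp hint
  rw [Measure.restrict_congr_set Ioo_ae_eq_Ioc,
    ← ofReal_integral_eq_lintegral_ofReal hint2 hnn]
  congr 1
  rw [← hcalc, intervalIntegral.integral_of_le hu1.le]

lemma max_minorant_scale {f g : ℝ → ℝ≥0∞} (hg : Measurable g)
    (hmax : ∀ h : ℝ → ℝ≥0∞, Measurable h → h ≤ f →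
      h ≤ᵐ[volume.restrict (Set.Ioo (0:ℝ) 1)] g)
    {t : ℝ} (ht0 : 0 < t) (ht1 : t < 1) :
    ∀ h : ℝ → ℝ≥0∞, Measurable h → h ≤ (fun s => f (t * s)) →
      h ≤ᵐ[volume.restrict (Set.Ioo (0:ℝ) 1)] fun s => g (t * s) := by
  intro h hh hle
  set h' : ℝ → ℝ≥0∞ := (Set.Ioo (0:ℝ) t).indicator (fun u => h (u / t)) with hh'
  have hh'm : Measurable h' :=
    (hh.comp (measurable_id.div_const t)).indicator measurableSet_Ioo
  have hh'f : h' ≤ f := by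
    intro u
    by_cases hu : u ∈ Set.Ioo (0:ℝ) t
    · rw [hh', Set.indicator_of_mem hu]
      have : t * (u / t) = u := by field_simp
      calc h (u / t) ≤ f (t * (u / t)) := hle (u / t)
        _ = f u := by rw [this]
    · rw [hh', Set.indicator_of_notMem hu]; exact zero_le
  have hind := hmax h' hh'm hh'f
  set N : Set ℝ := {u | ¬ h' u ≤ g u} with hN
  have hNm : MeasurableSet N := (measurableSet_le hh'm hg).compl
  have hN0 : volume (N ∩ Set.Ioo (0:ℝ) 1) = 0 := by
    have := ae_iff.mp hind
    rwa [Measure.restrict_apply hNm] at this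
  have hpre0 : volume ((fun s : ℝ => t * s) ⁻¹' (N ∩ Set.Ioo (0:ℝ) 1)) = 0 := by
    rw [Real.volume_preimage_mul_left (ne_of_gt ht0), hN0, mul_zero]
  refine (ae_restrict_iff' measurableSet_Ioo).2 ?_
  filter_upwards [measure_eq_zero_iff_ae_notMem.mp hpre0] with s hs hsIoo
  have hts : t * s ∈ Set.Ioo (0:ℝ) t :=
    ⟨mul_pos ht0 hsIoo.1, mul_lt_of_lt_one_right ht0 hsIoo.2⟩
  have hts1 : t * s ∈ Set.Ioo (0:ℝ) 1 := ⟨hts.1, lt_trans hts.2 ht1⟩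
  have hnot : t * s ∉ N := fun hmem => hs ⟨hmem, hts1⟩
  have hle' : h' (t * s) ≤ g (t * s) := not_not.mp fun hc => hnot hc
  rwa [hh', Set.indicator_of_mem hts, mul_div_cancel_left₀ s (ne_of_gt ht0)] at hle'

lemma scale_lintegral {G : ℝ → ℝ≥0∞} (hG : Measurable G) {t : ℝ} (ht0 : 0 < t) (ht1 : t < 1) :
    ∫⁻ s in Set.Ioo (0:ℝ) 1, G (t * s) =
      ENNReal.ofReal t⁻¹ * ∫⁻ u in Set.Ioo (0:ℝ) t, G u := by
  have hmeas : Measurable fun s : ℝ => t * s := measurable_id.const_mul t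
  have hpre : (fun s : ℝ => t * s) ⁻¹' (Set.Ioo 0 t) = Set.Ioo (0:ℝ) 1 := by
    ext s
    simp only [Set.mem_preimage, Set.mem_Ioo]
    constructor
    · rintro ⟨h1, h2⟩
      constructor
      · by_contra hs
        push_neg at hs
        nlinarith
      · nlinarith
    · rintro ⟨h1, h2⟩
      exact ⟨mul_pos ht0 h1, by nlinarith⟩
  calc ∫⁻ s in Set.Ioo (0:ℝ) 1, G (t * s)
      = ∫⁻ u, G u ∂(Measure.map (fun s => t * s) (volume.restrict (Set.Ioo (0:ℝ) 1))) :=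
        (lintegral_map hG hmeas).symm
    _ = ∫⁻ u, G u ∂((Measure.map (fun s : ℝ => t * s) volume).restrict (Set.Ioo 0 t)) := by
        rw [Measure.restrict_map hmeas measurableSet_Ioo, hpre]
    _ = ENNReal.ofReal t⁻¹ * ∫⁻ u in Set.Ioo (0:ℝ) t, G u := by
        rw [Real.map_volume_mul_left (ne_of_gt ht0), Measure.restrict_smul,
          lintegral_smul_measure, abs_of_pos (inv_pos.mpr ht0), smul_eq_mul]

/-- Let `E` be a real separable Banach space and `M` a Borel measure on
`E ∖ {0}`. With `M^{<1>}(A) := ∫_0^1 M(t⁻¹A) dt` (where `t⁻¹A = (fun x => t • x) ⁻¹' A`)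
and `M^{<m+1>} := (M^{<m>})^{<1>}`, for every integer `m ≥ 1` and every Borel set
`A ⊆ E ∖ {0}` one has
`M^{<m>}(A) = (1/(m-1)!) ∫_0^1 M(t⁻¹A) (-ln t)^(m-1) dt`, the equality holding in `[0,∞]`. -/
theorem iterated_sSelfdec_levyMeasure
    {E : Type*} [NormedAddCommGroup E] [NormedSpace ℝ E] [CompleteSpace E]
    [MeasurableSpace E] [BorelSpace E] [SecondCountableTopology E]
    (M : Measure E) (Mit : ℕ → Measure E)
    (h1 : ∀ A : Set E, MeasurableSet A → A ⊆ {(0:E)}ᶜ →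
        Mit 1 A = ∫⁻ t in Set.Ioo (0:ℝ) 1, M ((fun x => t • x) ⁻¹' A))
    (hstep : ∀ m : ℕ, 1 ≤ m → ∀ A : Set E, MeasurableSet A → A ⊆ {(0:E)}ᶜ →
        Mit (m + 1) A = ∫⁻ t in Set.Ioo (0:ℝ) 1, Mit m ((fun x => t • x) ⁻¹' A))
    (m : ℕ) (hm : 1 ≤ m) (A : Set E) (hA : MeasurableSet A) (hA0 : A ⊆ {(0:E)}ᶜ) :
    Mit m A = (((m - 1).factorial : ℝ≥0∞))⁻¹ *
      ∫⁻ t in Set.Ioo (0:ℝ) 1,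
        M ((fun x => t • x) ⁻¹' A) * ENNReal.ofReal ((-Real.log t) ^ (m - 1)) := by
  revert A
  induction m, hm using Nat.le_induction with
  | base =>
    intro A hA hA0
    simp only [Nat.sub_self, pow_zero, ENNReal.ofReal_one, mul_one, Nat.factorial_zero,
      Nat.cast_one, inv_one, one_mul]
    exact h1 A hA hA0
  | succ m hm IH =>
    intro A hA hA0
    haveI hfinM : IsFiniteMeasure (volume.restrict (Set.Ioo (0:ℝ) 1)) := by
      constructor
      rw [Measure.restrict_apply_univ]
      simp [Real.volume_Ioo]
    set f : ℝ → ℝ≥0∞ := fun u => M ((fun x : E => u • x) ⁻¹' A) with hf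
    obtain ⟨g, hgm, hgf, hgset⟩ :=
      exists_measurable_le_forall_setLIntegral_eq (volume.restrict (Set.Ioo (0:ℝ) 1)) f
    have hmax : ∀ h : ℝ → ℝ≥0∞, Measurable h → h ≤ f →
        h ≤ᵐ[volume.restrict (Set.Ioo (0:ℝ) 1)] g :=
      fun h hh hhf => max_minorant _ hgm (fun s => hgset s) h hh hhf
    set c : ℝ≥0∞ := (((m - 1).factorial : ℕ) : ℝ≥0∞)⁻¹ with hc
    set w : ℝ → ℝ≥0∞ := fun s => ENNReal.ofReal ((-Real.log s) ^ (m - 1)) with hw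
    have hwm : Measurable w := (Real.measurable_log.neg.pow_const _).ennreal_ofReal
    have hAtm : ∀ t : ℝ, MeasurableSet ((fun x : E => t • x) ⁻¹' A) :=
      fun t => hA.preimage (continuous_const_smul t).measurable
    have hAt0 : ∀ t : ℝ, ((fun x : E => t • x) ⁻¹' A) ⊆ {(0:E)}ᶜ := by
      intro t x hx
      simp only [Set.mem_compl_iff, Set.mem_singleton_iff]
      intro hx0
      exact hA0 hx (by simp [hx0])
    have hcomp : ∀ t s : ℝ,
        ((fun x : E => s • x) ⁻¹' ((fun x : E => t • x) ⁻¹' A))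
          = (fun x : E => (t * s) • x) ⁻¹' A := by
      intro t s
      ext x
      simp [smul_smul]
    -- per t rewrite using IH and the maximal minorant
    have hper : ∀ t ∈ Set.Ioo (0:ℝ) 1,
        Mit m ((fun x : E => t • x) ⁻¹' A)
          = c * ∫⁻ s in Set.Ioo (0:ℝ) 1, g (t * s) * w s := by
      intro t ht
      rw [IH _ (hAtm t) (hAt0 t)]
      congr 1
      have h1' : ∫⁻ s in Set.Ioo (0:ℝ) 1,
          M ((fun x : E => s • x) ⁻¹' ((fun x : E => t • x) ⁻¹' A)) * w s
          = ∫⁻ s in Set.Ioo (0:ℝ) 1, f (t * s) * w s :=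
        lintegral_congr fun s => by rw [hcomp t s]
      rw [h1']
      exact lintegral_mul_eq_of_max (hgm.comp (measurable_id.const_mul t))
        (fun s => hgf (t * s)) (max_minorant_scale hgm hmax ht.1 ht.2) hwm
        (fun s => ENNReal.ofReal_ne_top)
    have hscale : ∀ t ∈ Set.Ioo (0:ℝ) 1,
        ∫⁻ s in Set.Ioo (0:ℝ) 1, g (t * s) * w s
          = ENNReal.ofReal t⁻¹ * ∫⁻ u in Set.Ioo (0:ℝ) t,
              g u * ENNReal.ofReal ((Real.log t - Real.log u) ^ (m - 1)) := by
      intro t ht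
      have hGm : Measurable fun u => g u *
          ENNReal.ofReal ((Real.log t - Real.log u) ^ (m - 1)) :=
        hgm.mul (((measurable_const.sub Real.measurable_log).pow_const _).ennreal_ofReal)
      rw [← scale_lintegral hGm ht.1 ht.2]
      apply setLIntegral_congr_fun measurableSet_Ioo
      refine fun s hs => ?_
      have hlog : Real.log (t * s) = Real.log t + Real.log s :=
        Real.log_mul (ne_of_gt ht.1) (ne_of_gt hs.1)
      have h2 : Real.log t - Real.log (t * s) = -Real.log s := by rw [hlog]; ring
      dsimp only
      rw [h2]
    set S : Set (ℝ × ℝ) := {p : ℝ × ℝ | 0 < p.2} ∩ {p : ℝ × ℝ | p.2 < p.1} with hS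
    have hSm : MeasurableSet S :=
      (measurableSet_lt measurable_const measurable_snd).inter
        (measurableSet_lt measurable_snd measurable_fst)
    set B : ℝ × ℝ → ℝ≥0∞ := fun p =>
      ENNReal.ofReal p.1⁻¹ *
        (g p.2 * ENNReal.ofReal ((Real.log p.1 - Real.log p.2) ^ (m - 1))) with hB
    have hBm : Measurable B := (measurable_fst.inv.ennreal_ofReal).mul
      ((hgm.comp measurable_snd).mul
        (((Real.measurable_log.comp measurable_fst).sub
          (Real.measurable_log.comp measurable_snd)).pow_const _).ennreal_ofReal)
    have hins : ∀ t ∈ Set.Ioo (0:ℝ) 1,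
        ENNReal.ofReal t⁻¹ * ∫⁻ u in Set.Ioo (0:ℝ) t,
            g u * ENNReal.ofReal ((Real.log t - Real.log u) ^ (m - 1))
          = ∫⁻ u in Set.Ioo (0:ℝ) 1, S.indicator B (t, u) := by
      intro t ht
      have hptw : ∀ u : ℝ, S.indicator B (t, u)
          = (Set.Ioo (0:ℝ) t).indicator (fun u => B (t, u)) u := by
        intro u
        by_cases hu : u ∈ Set.Ioo (0:ℝ) t
        · rw [Set.indicator_of_mem hu, Set.indicator_of_mem (show (t,u) ∈ S from ⟨hu.1, hu.2⟩)]
        · rw [Set.indicator_of_notMem hu,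
            Set.indicator_of_notMem (fun hc => hu ⟨hc.1, hc.2⟩)]
      have hXm : Measurable fun u =>
          ENNReal.ofReal t⁻¹ *
            (g u * ENNReal.ofReal ((Real.log t - Real.log u) ^ (m - 1))) :=
        measurable_const.mul (hgm.mul
          (((measurable_const.sub Real.measurable_log).pow_const _).ennreal_ofReal))
      calc ENNReal.ofReal t⁻¹ * ∫⁻ u in Set.Ioo (0:ℝ) t,
              g u * ENNReal.ofReal ((Real.log t - Real.log u) ^ (m - 1))
          = ∫⁻ u in Set.Ioo (0:ℝ) t, ENNReal.ofReal t⁻¹ *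
              (g u * ENNReal.ofReal ((Real.log t - Real.log u) ^ (m - 1))) :=
            (lintegral_const_mul _ (hgm.mul
              (((measurable_const.sub Real.measurable_log).pow_const _).ennreal_ofReal))).symm
        _ = ∫⁻ u in Set.Ioo (0:ℝ) 1, (Set.Ioo (0:ℝ) t).indicator (fun u => B (t, u)) u := by
            rw [lintegral_indicator measurableSet_Ioo,
              Measure.restrict_restrict measurableSet_Ioo,
              Set.inter_eq_self_of_subset_left (Set.Ioo_subset_Ioo le_rfl ht.2.le)]
        _ = ∫⁻ u in Set.Ioo (0:ℝ) 1, S.indicator B (t, u) := by simp only [hptw]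
    have hcne : c ≠ ⊤ := ENNReal.inv_ne_top.mpr (by exact_mod_cast Nat.factorial_ne_zero _)
    have hinner : ∀ u ∈ Set.Ioo (0:ℝ) 1,
        ∫⁻ t in Set.Ioo (0:ℝ) 1, S.indicator B (t, u)
          = g u * ENNReal.ofReal ((-Real.log u) ^ m / m) := by
      intro u hu
      have hptw : ∀ t : ℝ, S.indicator B (t, u)
          = (Set.Ioi u).indicator (fun t => B (t, u)) t := by
        intro t
        by_cases htu : t ∈ Set.Ioi u
        · rw [Set.indicator_of_mem htu, Set.indicator_of_mem (show (t,u) ∈ S from ⟨hu.1, htu⟩)]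
        · rw [Set.indicator_of_notMem htu,
            Set.indicator_of_notMem (fun hc => htu hc.2)]
      simp only [hptw]
      rw [lintegral_indicator measurableSet_Ioi,
        Measure.restrict_restrict measurableSet_Ioi]
      have hset' : Set.Ioi u ∩ Set.Ioo (0:ℝ) 1 = Set.Ioo u 1 := by
        ext t
        simp only [Set.mem_inter_iff, Set.mem_Ioi, Set.mem_Ioo]
        constructor
        · rintro ⟨hx1, _, hx3⟩; exact ⟨hx1, hx3⟩
        · rintro ⟨hx1, hx2⟩; exact ⟨hx1, lt_trans hu.1 hx1, hx2⟩
      rw [hset']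
      have hBtu : ∀ t : ℝ, t ∈ Set.Ioo u 1 → B (t, u)
          = g u * ENNReal.ofReal (t⁻¹ * (Real.log t - Real.log u) ^ (m - 1)) := by
        intro t ht
        have ht0 : (0:ℝ) < t := lt_trans hu.1 ht.1
        simp only [hB]
        rw [ENNReal.ofReal_mul (inv_nonneg.mpr ht0.le)]
        ring
      rw [setLIntegral_congr_fun measurableSet_Ioo hBtu,
        lintegral_const_mul (f := fun t => ENNReal.ofReal (t⁻¹ * (Real.log t - Real.log u) ^ (m - 1))) _ ((measurable_inv.mul
          ((Real.measurable_log.sub measurable_const).pow_const _)).ennreal_ofReal),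
        log_kernel_integral hu.1 hu.2 (by omega : 1 ≤ m)]
    calc Mit (m + 1) A
        = ∫⁻ t in Set.Ioo (0:ℝ) 1, Mit m ((fun x : E => t • x) ⁻¹' A) :=
          hstep m hm A hA hA0
      _ = ∫⁻ t in Set.Ioo (0:ℝ) 1, c * (ENNReal.ofReal t⁻¹ *
            ∫⁻ u in Set.Ioo (0:ℝ) t,
              g u * ENNReal.ofReal ((Real.log t - Real.log u) ^ (m - 1))) := by
          apply setLIntegral_congr_fun measurableSet_Ioo
          refine fun t ht => ?_
          dsimp only
          rw [hper t ht, hscale t ht]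
      _ = c * ∫⁻ t in Set.Ioo (0:ℝ) 1, ∫⁻ u in Set.Ioo (0:ℝ) 1, S.indicator B (t, u) := by
          rw [← lintegral_const_mul' c _ hcne]
          apply setLIntegral_congr_fun measurableSet_Ioo
          refine fun t ht => ?_
          dsimp only
          rw [hins t ht]
      _ = c * ∫⁻ u in Set.Ioo (0:ℝ) 1, ∫⁻ t in Set.Ioo (0:ℝ) 1, S.indicator B (t, u) := by
          congr 1
          exact lintegral_lintegral_swap (hBm.indicator hSm).aemeasurable
      _ = c * ∫⁻ u in Set.Ioo (0:ℝ) 1, g u * ENNReal.ofReal ((-Real.log u) ^ m / m) := by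
          congr 1
          apply setLIntegral_congr_fun measurableSet_Ioo
          exact hinner
      _ = c * ((∫⁻ u in Set.Ioo (0:ℝ) 1, g u * ENNReal.ofReal ((-Real.log u) ^ m))
            * ((m : ℝ≥0∞))⁻¹) := by
          congr 1
          have h1' : ∀ u : ℝ, g u * ENNReal.ofReal ((-Real.log u) ^ m / m)
              = (g u * ENNReal.ofReal ((-Real.log u) ^ m)) * ((m : ℝ≥0∞))⁻¹ := by
            intro u
            rw [ENNReal.ofReal_div_of_pos (by exact_mod_cast Nat.pos_of_ne_zero (by omega)),
              ENNReal.ofReal_natCast, div_eq_mul_inv, mul_assoc]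
          simp only [h1']
          exact lintegral_mul_const _
            (hgm.mul (Real.measurable_log.neg.pow_const _).ennreal_ofReal)
      _ = (((m + 1 - 1).factorial : ℕ) : ℝ≥0∞)⁻¹ *
            ∫⁻ u in Set.Ioo (0:ℝ) 1, g u * ENNReal.ofReal ((-Real.log u) ^ (m + 1 - 1)) := by
          simp only [Nat.add_sub_cancel]
          rw [hc]
          have hfact : ((m.factorial : ℕ) : ℝ≥0∞)
              = (m : ℝ≥0∞) * (((m - 1).factorial : ℕ) : ℝ≥0∞) := by
            rw [← Nat.cast_mul, Nat.mul_factorial_pred (by omega)]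
          rw [hfact, ENNReal.mul_inv (Or.inl (by exact_mod_cast (by omega : m ≠ 0)))
            (Or.inl (ENNReal.natCast_ne_top m))]
          ring
      _ = (((m + 1 - 1).factorial : ℕ) : ℝ≥0∞)⁻¹ *
            ∫⁻ t in Set.Ioo (0:ℝ) 1,
              M ((fun x => t • x) ⁻¹' A) * ENNReal.ofReal ((-Real.log t) ^ (m + 1 - 1)) := by
          congr 1
          simp only [Nat.add_sub_cancel]
          exact (lintegral_mul_eq_of_max hgm hgf hmax
            ((Real.measurable_log.neg.pow_const m).ennreal_ofReal)
            (fun x => ENNReal.ofReal_ne_top)).symm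
end

section
/- Suppose M({x : ‖x‖ > 1}) < ∞. Then for every integer m ≥ 1 the E-valued Bochner integrals below are well defined and ∫_{{x : ‖x‖ > 1}} x ‖x‖^{−2} M^{<m>}(dx) = (1/m!) ∫_{{z : ‖z‖ > 1}} z ‖z‖^{−2} (ln ‖z‖)^m M(dz). -/
open MeasureTheory Real

lemma log_pow_le_aux (n : ℕ) {u : ℝ} (hu : 1 ≤ u) : (Real.log u) ^ n ≤ (n:ℝ) ^ n * u := by
  rcases Nat.eq_zero_or_pos n with hn | hn
  · simp [hn]; linarith
  have hu0 : (0:ℝ) < u := by linarith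
  have hlog : Real.log u = n * Real.log (u ^ ((n:ℝ)⁻¹)) := by
    rw [Real.log_rpow hu0]
    field_simp
  have h1 : Real.log (u ^ ((n:ℝ)⁻¹)) ≤ u ^ ((n:ℝ)⁻¹) := by
    have h := Real.log_le_sub_one_of_pos (Real.rpow_pos_of_pos hu0 ((n:ℝ)⁻¹))
    linarith
  have hr0 : (0:ℝ) ≤ u ^ ((n:ℝ)⁻¹) := (Real.rpow_pos_of_pos hu0 _).le
  have h2 : Real.log u ≤ n * u ^ ((n:ℝ)⁻¹) := by
    rw [hlog]
    exact mul_le_mul_of_nonneg_left h1 (by positivity)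
  have h3 : (Real.log u) ^ n ≤ ((n:ℝ) * u ^ ((n:ℝ)⁻¹)) ^ n :=
    pow_le_pow_left₀ (Real.log_nonneg hu) h2 n
  calc (Real.log u) ^ n ≤ ((n:ℝ) * u ^ ((n:ℝ)⁻¹)) ^ n := h3
    _ = (n:ℝ)^n * (u ^ ((n:ℝ)⁻¹)) ^ n := mul_pow _ _ _
    _ = (n:ℝ)^n * u := by
        rw [← Real.rpow_natCast (u ^ ((n:ℝ)⁻¹)) n, ← Real.rpow_mul hu0.le,
          inv_mul_cancel₀ (by exact_mod_cast hn.ne' : (n:ℝ) ≠ 0), Real.rpow_one]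

lemma log_int_aux (L : ℝ) (hL : 0 < L) (n : ℕ) :
    ∫ t in Set.Ioo (Real.exp (-L)) 1, (Real.log t + L) ^ n / t
      = L ^ (n+1) / (n+1) := by
  have ha : (0:ℝ) < Real.exp (-L) := Real.exp_pos _
  have hab : Real.exp (-L) ≤ 1 := by
    rw [Real.exp_le_one_iff]; linarith
  have hIcc : ∀ t ∈ Set.uIcc (Real.exp (-L)) 1, (0:ℝ) < t := by
    intro t ht
    rw [Set.uIcc_of_le hab] at ht
    exact lt_of_lt_of_le ha ht.1
  have hderiv : ∀ t ∈ Set.uIcc (Real.exp (-L)) 1,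
      HasDerivAt (fun t => (Real.log t + L) ^ (n+1) / (n+1)) ((Real.log t + L) ^ n / t) t := by
    intro t ht
    have ht0 := hIcc t ht
    have h1 : HasDerivAt (fun t => Real.log t + L) t⁻¹ t :=
      (Real.hasDerivAt_log ht0.ne').add_const L
    have h2 := (h1.pow (n+1)).div_const ((n:ℝ)+1)
    refine h2.congr_deriv ?_
    have : ((n:ℝ)+1) ≠ 0 := by positivity
    rw [Nat.add_sub_cancel]; push_cast
    field_simp
  have hcont : IntervalIntegrable (fun t => (Real.log t + L) ^ n / t) volume
      (Real.exp (-L)) 1 := by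
    apply ContinuousOn.intervalIntegrable
    apply ContinuousOn.div
    · exact ((Real.continuousOn_log.mono (fun t ht => (hIcc t ht).ne')).add continuousOn_const).pow n
    · exact continuousOn_id
    · exact fun t ht => (hIcc t ht).ne'
  have h := intervalIntegral.integral_eq_sub_of_hasDerivAt hderiv hcont
  rw [intervalIntegral.integral_of_le hab, integral_Ioc_eq_integral_Ioo] at h
  rw [h, Real.log_one, Real.log_exp]
  simp

/-- Let `E` be a real separable Banach space and `M` a Borel measure on
`E ∖ {0}` with `M({x : ‖x‖ > 1}) < ∞`.  With `M^{<0>} := M` and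
`M^{<j+1>}(A) := ∫_0^1 M^{<j>}(t⁻¹A) dt`, for every integer `m ≥ 1` the Bochner integrals
below are well defined and
`∫_{‖x‖>1} x ‖x‖⁻² M^{<m>}(dx) = (1/m!) ∫_{‖z‖>1} z ‖z‖⁻² (ln ‖z‖)^m M(dz)`. -/
theorem integral_inv_sq_norm_iterated
    {E : Type*} [NormedAddCommGroup E] [NormedSpace ℝ E] [CompleteSpace E]
    [MeasurableSpace E] [BorelSpace E] [SecondCountableTopology E]
    (M : Measure E) (hM : M {x : E | 1 < ‖x‖} < ⊤)
    (Mit : ℕ → Measure E) (h0 : Mit 0 = M)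
    (hstep : ∀ j : ℕ, ∀ A : Set E, MeasurableSet A → A ⊆ {(0:E)}ᶜ →
        Mit (j + 1) A = ∫⁻ t in Set.Ioo (0:ℝ) 1, Mit j ((fun x => t • x) ⁻¹' A))
    (m : ℕ) (hm : 1 ≤ m) :
    IntegrableOn (fun x : E => (‖x‖ ^ 2)⁻¹ • x) {x : E | 1 < ‖x‖} (Mit m)
    ∧ IntegrableOn (fun z : E => ((Real.log ‖z‖) ^ m / ‖z‖ ^ 2) • z) {z : E | 1 < ‖z‖} M
    ∧ ∫ x in {x : E | 1 < ‖x‖}, (‖x‖ ^ 2)⁻¹ • x ∂(Mit m)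
        = (m.factorial : ℝ)⁻¹ •
          ∫ z in {z : E | 1 < ‖z‖}, ((Real.log ‖z‖) ^ m / ‖z‖ ^ 2) • z ∂M := by
  have hS : MeasurableSet {x : E | 1 < ‖x‖} :=
    measurableSet_lt measurable_const measurable_norm
  set S : Set E := {x : E | 1 < ‖x‖} with hSdef
  have hS0 : S ⊆ {(0:E)}ᶜ := by
    intro x hx
    simp only [Set.mem_compl_iff, Set.mem_singleton_iff]
    intro h
    rw [hSdef] at hx
    simp only [Set.mem_setOf_eq, h, norm_zero] at hx
    linarith
  have hsub : ∀ t ∈ Set.Ioo (0:ℝ) 1, (fun x : E => t • x) ⁻¹' S ⊆ S := by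
    intro t ht x hx
    simp only [Set.mem_preimage, hSdef, Set.mem_setOf_eq, norm_smul, Real.norm_eq_abs,
      abs_of_pos ht.1] at hx ⊢
    nlinarith [norm_nonneg x, ht.2]
  have hfin : ∀ j, Mit j S ≠ ⊤ := by
    intro j
    induction j with
    | zero => rw [h0]; exact hM.ne
    | succ j ih =>
      rw [hstep j S hS hS0]
      have hb : ∫⁻ t in Set.Ioo (0:ℝ) 1, Mit j ((fun x : E => t • x) ⁻¹' S)
          ≤ ∫⁻ t in Set.Ioo (0:ℝ) 1, Mit j S :=
        setLIntegral_mono' measurableSet_Ioo (fun t ht => measure_mono (hsub t ht))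
      refine ne_top_of_le_ne_top ?_ hb
      rw [setLIntegral_const]
      exact ENNReal.mul_ne_top ih (by simp [Real.volume_Ioo])
  have hfm : ∀ j, IsFiniteMeasure ((Mit j).restrict S) := fun j =>
    ⟨by rw [Measure.restrict_apply_univ]; exact (hfin j).lt_top⟩
  haveI hIoo : IsFiniteMeasure (volume.restrict (Set.Ioo (0:ℝ) 1)) :=
    ⟨by rw [Measure.restrict_apply_univ]; simp [Real.volume_Ioo]⟩
  set f : ℕ → E → E := fun n z => ((Real.log ‖z‖) ^ n / ‖z‖ ^ 2) • z with hfdef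
  have hfmeas : ∀ n, Measurable (f n) := fun n =>
    (((Real.measurable_log.comp measurable_norm).pow_const n).div
      (measurable_norm.pow_const 2)).smul measurable_id
  have hbound : ∀ (n : ℕ) (z : E), z ∈ S → ‖f n z‖ ≤ (n:ℝ)^n := by
    intro n z hz
    have hz1 : (1:ℝ) < ‖z‖ := hz
    have hz0 : (0:ℝ) < ‖z‖ := lt_trans one_pos hz1
    have hlog : (0:ℝ) ≤ Real.log ‖z‖ := Real.log_nonneg hz1.le
    have hkey := log_pow_le_aux n hz1.le
    simp only [hfdef, norm_smul, Real.norm_eq_abs]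
    rw [abs_of_nonneg (by positivity)]
    rw [div_mul_eq_mul_div, div_le_iff₀ (by positivity)]
    nlinarith [mul_le_mul_of_nonneg_right hkey hz0.le]
  have hint : ∀ (n j : ℕ), IntegrableOn (f n) S (Mit j) := by
    intro n j
    haveI := hfm j
    refine ⟨((hfmeas n).stronglyMeasurable).aestronglyMeasurable, ?_⟩
    apply HasFiniteIntegral.of_bounded (C := (n:ℝ)^n)
    rw [ae_restrict_iff' hS]
    exact ae_of_all _ (fun z hz => hbound n z hz)
  -- key single-step lemma
  have key : ∀ (j n : ℕ), ∫ x in S, f n x ∂(Mit (j+1))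
      = ((n:ℝ)+1)⁻¹ • ∫ x in S, f (n+1) x ∂(Mit j) := by
    intro j n
    haveI := hfm j
    set ν := (Mit j).restrict S with hν
    set Φ : E × ℝ → E := fun p => p.2 • p.1 with hΦdef
    have hΦ : Measurable Φ := (continuous_snd.smul continuous_fst).measurable
    set pp := ν.prod (volume.restrict (Set.Ioo (0:ℝ) 1)) with hpp
    have hrestr : (Mit (j+1)).restrict S = (pp.map Φ).restrict S := by
      ext A hA
      rw [Measure.restrict_apply hA, Measure.restrict_apply hA,
        Measure.map_apply hΦ (hA.inter hS),
        hstep j (A ∩ S) (hA.inter hS) ((Set.inter_subset_right).trans hS0),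
        Measure.prod_apply_symm (hΦ (hA.inter hS))]
      refine setLIntegral_congr_fun measurableSet_Ioo ?_
      intro t ht
      have hB : MeasurableSet ((fun x : E => t • x) ⁻¹' (A ∩ S)) :=
        (measurable_const_smul t) (hA.inter hS)
      have hBsub : (fun x : E => t • x) ⁻¹' (A ∩ S) ⊆ S :=
        (Set.preimage_mono Set.inter_subset_right).trans (hsub t ht)
      have hpre : (fun x : E => (x, t)) ⁻¹' (Φ ⁻¹' (A ∩ S))
          = (fun x : E => t • x) ⁻¹' (A ∩ S) := rfl
      beta_reduce
      rw [hpre, hν, Measure.restrict_apply hB, Set.inter_eq_left.mpr hBsub]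
    calc ∫ x in S, f n x ∂(Mit (j+1))
        = ∫ x in S, f n x ∂(pp.map Φ) := by rw [hrestr]
      _ = ∫ p in Φ ⁻¹' S, f n (Φ p) ∂pp :=
          setIntegral_map hS ((hfmeas n).stronglyMeasurable).aestronglyMeasurable
            hΦ.aemeasurable
      _ = ∫ p, Set.indicator (Φ ⁻¹' S) (fun p => f n (Φ p)) p ∂pp :=
          (integral_indicator (hΦ hS)).symm
      _ = ∫ x, (∫ t in Set.Ioo (0:ℝ) 1,
            Set.indicator (Φ ⁻¹' S) (fun p : E × ℝ => f n (Φ p)) (x, t)) ∂ν := by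
          apply integral_prod
          refine ⟨((((hfmeas n).comp hΦ).indicator (hΦ hS)).stronglyMeasurable).aestronglyMeasurable, ?_⟩
          apply HasFiniteIntegral.of_bounded (C := (n:ℝ)^n)
          refine ae_of_all _ (fun p => ?_)
          by_cases hp : p ∈ Φ ⁻¹' S
          · rw [Set.indicator_of_mem hp]
            exact hbound n (Φ p) hp
          · rw [Set.indicator_of_notMem hp]
            simp only [norm_zero]
            positivity
      _ = ∫ x in S, ((((n:ℝ)+1)⁻¹ * ((Real.log ‖x‖)^(n+1) / ‖x‖^2)) • x) ∂(Mit j) := by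
          refine setIntegral_congr_fun hS (fun x hx => ?_)
          have hx1 : (1:ℝ) < ‖x‖ := hx
          have hx0 : (0:ℝ) < ‖x‖ := lt_trans one_pos hx1
          have hLpos : 0 < Real.log ‖x‖ := Real.log_pos hx1
          have hT : MeasurableSet {t : ℝ | 1 < ‖t • x‖} :=
            measurableSet_lt measurable_const
              ((continuous_id.smul continuous_const).norm.measurable)
          have e1 : ∀ t : ℝ, Set.indicator (Φ ⁻¹' S) (fun p : E × ℝ => f n (Φ p)) (x, t)
              = Set.indicator {t : ℝ | 1 < ‖t • x‖} (fun t => f n (t • x)) t := by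
            intro t
            by_cases h : 1 < ‖t • x‖
            · rw [Set.indicator_of_mem (show t ∈ {t : ℝ | 1 < ‖t • x‖} from h),
                Set.indicator_of_mem (show (x, t) ∈ Φ ⁻¹' S from h)]
            · rw [Set.indicator_of_notMem (show t ∉ {t : ℝ | 1 < ‖t • x‖} from h),
                Set.indicator_of_notMem (show (x, t) ∉ Φ ⁻¹' S from h)]
          have hseteq : {t : ℝ | 1 < ‖t • x‖} ∩ Set.Ioo (0:ℝ) 1 = Set.Ioo (‖x‖⁻¹) 1 := by
            ext t
            simp only [Set.mem_inter_iff, Set.mem_setOf_eq, Set.mem_Ioo, norm_smul,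
              Real.norm_eq_abs]
            constructor
            · rintro ⟨h1, h2, h3⟩
              rw [abs_of_pos h2] at h1
              refine ⟨?_, h3⟩
              nlinarith [mul_inv_cancel₀ (ne_of_gt hx0)]
            · rintro ⟨h1, h2⟩
              have ht0 : 0 < t := lt_trans (inv_pos.mpr hx0) h1
              rw [abs_of_pos ht0]
              refine ⟨?_, ht0, h2⟩
              nlinarith [mul_inv_cancel₀ (ne_of_gt hx0)]
          have e2 : ∀ t ∈ Set.Ioo (‖x‖⁻¹) 1,
              f n (t • x) = ((Real.log t + Real.log ‖x‖)^n / t * (‖x‖^2)⁻¹) • x := by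
            intro t ht
            have ht0 : 0 < t := lt_trans (inv_pos.mpr hx0) ht.1
            simp only [hfdef]
            rw [norm_smul, Real.norm_eq_abs, abs_of_pos ht0,
              Real.log_mul ht0.ne' hx0.ne', smul_smul]
            congr 1
            field_simp
          calc (∫ t in Set.Ioo (0:ℝ) 1,
                Set.indicator (Φ ⁻¹' S) (fun p : E × ℝ => f n (Φ p)) (x, t))
              = ∫ t in Set.Ioo (0:ℝ) 1,
                  Set.indicator {t : ℝ | 1 < ‖t • x‖} (fun t => f n (t • x)) t := by
                simp only [e1]
            _ = ∫ t in {t : ℝ | 1 < ‖t • x‖}, f n (t • x) ∂(volume.restrict (Set.Ioo (0:ℝ) 1)) :=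
                integral_indicator hT
            _ = ∫ t in ({t : ℝ | 1 < ‖t • x‖} ∩ Set.Ioo (0:ℝ) 1), f n (t • x) := by
                rw [Measure.restrict_restrict hT]
            _ = ∫ t in Set.Ioo (‖x‖⁻¹) 1, f n (t • x) := by rw [hseteq]
            _ = ∫ t in Set.Ioo (‖x‖⁻¹) 1,
                  ((Real.log t + Real.log ‖x‖)^n / t * (‖x‖^2)⁻¹) • x :=
                setIntegral_congr_fun measurableSet_Ioo e2
            _ = (∫ t in Set.Ioo (‖x‖⁻¹) 1,
                  (Real.log t + Real.log ‖x‖)^n / t * (‖x‖^2)⁻¹) • x :=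
                integral_smul_const _ x
            _ = ((∫ t in Set.Ioo (‖x‖⁻¹) 1,
                  (Real.log t + Real.log ‖x‖)^n / t) * (‖x‖^2)⁻¹) • x := by
                rw [integral_mul_const]
            _ = ((Real.log ‖x‖)^(n+1) / ((n:ℝ)+1) * (‖x‖^2)⁻¹) • x := by
                rw [show ‖x‖⁻¹ = Real.exp (-(Real.log ‖x‖)) from by
                  rw [Real.exp_neg, Real.exp_log hx0]]
                rw [log_int_aux _ hLpos n]
            _ = (((n:ℝ)+1)⁻¹ * ((Real.log ‖x‖)^(n+1) / ‖x‖^2)) • x := by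
                congr 1
                rw [div_eq_mul_inv, div_eq_mul_inv]
                ring
      _ = ∫ x in S, ((n:ℝ)+1)⁻¹ • f (n+1) x ∂(Mit j) := by
          refine setIntegral_congr_fun hS (fun x _ => ?_)
          simp only [hfdef]
          exact (smul_smul _ _ _).symm
      _ = ((n:ℝ)+1)⁻¹ • ∫ x in S, f (n+1) x ∂(Mit j) := integral_smul _ _
  -- iterate
  have main : ∀ (k j n : ℕ), ∫ x in S, f n x ∂(Mit (j+k))
      = (((n+k).factorial : ℝ) / (n.factorial : ℝ))⁻¹ • ∫ x in S, f (n+k) x ∂(Mit j) := by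
    intro k
    induction k with
    | zero =>
      intro j n
      simp [div_self (Nat.cast_ne_zero.mpr (Nat.factorial_ne_zero n) : ((n.factorial : ℝ)) ≠ 0)]
    | succ k ih =>
      intro j n
      rw [show j + (k+1) = (j+k) + 1 from rfl, key (j+k) n, ih j (n+1), smul_smul,
        show n+1+k = n+(k+1) from by omega]
      congr 1
      have h3 : (n.factorial : ℝ) ≠ 0 := Nat.cast_ne_zero.mpr (Nat.factorial_ne_zero n)
      have h4 : ((n+1).factorial : ℝ) ≠ 0 := Nat.cast_ne_zero.mpr (Nat.factorial_ne_zero _)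
      have h5 : ((n+(k+1)).factorial : ℝ) ≠ 0 := Nat.cast_ne_zero.mpr (Nat.factorial_ne_zero _)
      rw [← mul_inv]
      congr 1
      rw [show ((n+1).factorial : ℝ) = ((n:ℝ)+1) * (n.factorial : ℝ) from by
        rw [Nat.factorial_succ]; push_cast; ring]
      field_simp
  have hf0 : (fun x : E => (‖x‖^2)⁻¹ • x) = f 0 := by
    funext x
    simp [hfdef, one_div]
  refine ⟨?_, ?_, ?_⟩
  · rw [hf0]; exact hint 0 m
  · rw [← h0]
    exact hint m 0
  · have h := main m 0 0
    rw [zero_add, h0] at h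
    rw [hf0, h]
    simp [hfdef, Nat.factorial_zero]
end

section
/- Suppose M({x : ‖x‖ > 1}) < ∞, fix a ∈ E, and define a^{<0>} := a and a^{<j+1>} := (1/2)(a^{<j>} + ∫_{{x : ‖x‖ > 1}} x ‖x‖^{−2} M^{<j>}(dx)) for j ≥ 0, where M^{<0>} := M. Then for every integer m ≥ 1, a^{<m>} = 2^{−m} ( a + ∫_{{x : ‖x‖ > 1}} x ‖x‖^{−2} ∑_{j=0}^{m−1} (2 ln ‖x‖)^j / j! · M(dx) ) = 2^{−m} ( a + (1/Γ(m)) ∫_{{x : ‖x‖ > 1}} x · Γ(m, 2 ln ‖x‖) M(dx) ), where Γ(m,x) := ∫_x^∞ e^{−t} t^{m−1} dt is the incomplete gamma function. -/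
open MeasureTheory Real

/-- The (upper) incomplete gamma function `Γ(a, x) = ∫_x^∞ e^{-t} t^{a-1} dt`. -/
noncomputable def incGamma (a x : ℝ) : ℝ := ∫ t in Set.Ioi x, Real.exp (-t) * t ^ (a - 1)

set_option linter.unusedSectionVars false
set_option maxHeartbeats 1000000

section Aux

variable {E : Type*} [NormedAddCommGroup E] [NormedSpace ℝ E] [CompleteSpace E]
  [MeasurableSpace E] [BorelSpace E] [SecondCountableTopology E]

lemma incGamma_nat_eq (n : ℕ) (x : ℝ) (hx : 0 ≤ x) :
    incGamma (n + 1 : ℕ) x =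
      Real.exp (-x) * ∑ j ∈ Finset.range (n + 1), (n.factorial / j.factorial : ℝ) * x ^ j := by
  have h1 : incGamma (n + 1 : ℕ) x = ∫ t in Set.Ioi x, Real.exp (-t) * t ^ n := by
    unfold incGamma
    refine setIntegral_congr_fun measurableSet_Ioi (fun t ht => ?_)
    have ht0 : 0 < t := lt_of_le_of_lt hx ht
    have h2 : ((n + 1 : ℕ) : ℝ) - 1 = (n : ℝ) := by push_cast; ring
    rw [h2, Real.rpow_natCast]
  rw [h1]
  set F : ℝ → ℝ := fun t => -(Real.exp (-t) * ∑ j ∈ Finset.range (n + 1), (n.factorial / j.factorial : ℝ) * t ^ j) with hF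
  have hderiv : ∀ t ∈ Set.Ici x, HasDerivAt F (Real.exp (-t) * t ^ n) t := by
    intro t _
    have h2 : HasDerivAt (fun t : ℝ => Real.exp (-t)) (-Real.exp (-t)) t := by
      convert (hasDerivAt_neg t).exp using 1; ring
    have h3 : HasDerivAt (fun t : ℝ => ∑ j ∈ Finset.range (n + 1), (n.factorial / j.factorial : ℝ) * t ^ j)
        (∑ j ∈ Finset.range (n + 1), (n.factorial / j.factorial : ℝ) * (j * t ^ (j - 1))) t := by
      refine HasDerivAt.fun_sum (fun j _ => ?_)
      exact (hasDerivAt_pow j t).const_mul _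
    have hsum : (∑ j ∈ Finset.range (n + 1), (n.factorial / j.factorial : ℝ) * (j * t ^ (j - 1)))
        = ∑ j ∈ Finset.range n, (n.factorial / j.factorial : ℝ) * t ^ j := by
      rw [Finset.sum_range_succ']
      simp only [Nat.cast_zero, zero_mul, mul_zero, add_zero]
      refine Finset.sum_congr rfl (fun j _ => ?_)
      rw [Nat.factorial_succ, Nat.add_sub_cancel]
      have hj : ((j.factorial : ℝ)) ≠ 0 := Nat.cast_ne_zero.mpr j.factorial_ne_zero
      push_cast
      field_simp
    have h5 := (h2.mul h3).neg
    have heq : -(-Real.exp (-t) * (∑ j ∈ Finset.range (n + 1), (n.factorial / j.factorial : ℝ) * t ^ j)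
        + Real.exp (-t) * (∑ j ∈ Finset.range (n + 1), (n.factorial / j.factorial : ℝ) * (j * t ^ (j - 1))))
        = Real.exp (-t) * t ^ n := by
      rw [hsum, Finset.sum_range_succ,
        div_self (Nat.cast_ne_zero.mpr n.factorial_ne_zero : ((n.factorial : ℝ)) ≠ 0)]
      ring
    rw [heq] at h5
    exact h5
  have hint : IntegrableOn (fun t => Real.exp (-t) * t ^ n) (Set.Ioi x) := by
    have h0 : IntegrableOn (fun t => Real.exp (-t) * t ^ ((n + 1 : ℝ) - 1)) (Set.Ioi 0) :=
      Real.GammaIntegral_convergent (by positivity)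
    have h0' : IntegrableOn (fun t => Real.exp (-t) * t ^ n) (Set.Ioi 0) := by
      refine (h0.congr_fun (fun t ht => ?_) measurableSet_Ioi)
      have h2 : ((n + 1 : ℝ) - 1) = (n : ℝ) := by ring
      simp only [h2, Real.rpow_natCast]
    rcases eq_or_lt_of_le hx with h | h
    · rwa [← h]
    · exact h0'.mono_set (Set.Ioi_subset_Ioi hx)
  have htend : Filter.Tendsto F Filter.atTop (nhds 0) := by
    have h4 : ∀ j : ℕ, Filter.Tendsto (fun t : ℝ => Real.exp (-t) * ((n.factorial / j.factorial : ℝ) * t ^ j)) Filter.atTop (nhds 0) := by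
      intro j
      have := (tendsto_pow_mul_exp_neg_atTop_nhds_zero j).const_mul ((n.factorial / j.factorial : ℝ))
      rw [mul_zero] at this
      refine this.congr (fun t => ?_)
      ring
    have h5 : Filter.Tendsto (fun t : ℝ => ∑ j ∈ Finset.range (n+1), Real.exp (-t) * ((n.factorial / j.factorial : ℝ) * t ^ j)) Filter.atTop (nhds 0) := by
      simpa using tendsto_finset_sum (Finset.range (n+1)) (fun j _ => h4 j)
    have h6 : Filter.Tendsto (fun t : ℝ => Real.exp (-t) * ∑ j ∈ Finset.range (n+1), (n.factorial / j.factorial : ℝ) * t ^ j) Filter.atTop (nhds 0) :=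
      h5.congr (fun t => (Finset.mul_sum _ _ _).symm)
    simpa [hF] using h6.neg
  have hmain := MeasureTheory.integral_Ioi_of_hasDerivAt_of_tendsto
      ((hderiv x Set.self_mem_Ici).continuousAt.continuousWithinAt)
      (fun t ht => hderiv t (Set.mem_Ici.mpr (le_of_lt ht))) hint htend
  rw [hmain]
  simp [hF]

variable {E : Type*} [NormedAddCommGroup E] [NormedSpace ℝ E] [CompleteSpace E]
  [MeasurableSpace E] [BorelSpace E] [SecondCountableTopology E]

noncomputable def GG (k : ℕ) (x : E) : E := ((Real.log ‖x‖) ^ k / k.factorial / ‖x‖ ^ 2) • x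

lemma GG_meas (k : ℕ) : Measurable (GG (E := E) k) := by
  apply Measurable.smul _ measurable_id
  exact (((Real.measurable_log.comp measurable_norm).pow_const k).div_const _).div
    (measurable_norm.pow_const 2)

lemma hSmeas : MeasurableSet {x : E | 1 < ‖x‖} :=
  measurableSet_lt measurable_const measurable_norm

lemma GG_bound (k : ℕ) {x : E} (hx : 1 < ‖x‖) : ‖GG k x‖ ≤ ((k : ℝ) + 1) ^ k := by
  set r := ‖x‖ with hr
  have hr1 : (1:ℝ) < r := hx
  have hr0 : (0:ℝ) < r := lt_trans one_pos hr1
  have hL0 : 0 ≤ Real.log r := Real.log_nonneg (le_of_lt hr1)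
  have hε : (0:ℝ) < 1 / ((k:ℝ)+1) := by positivity
  have h1 : Real.log r ≤ ((k:ℝ)+1) * r ^ (1/((k:ℝ)+1)) := by
    have := Real.log_le_rpow_div (le_of_lt hr0) hε
    calc Real.log r ≤ r ^ (1/((k:ℝ)+1)) / (1/((k:ℝ)+1)) := this
      _ = ((k:ℝ)+1) * r ^ (1/((k:ℝ)+1)) := by rw [div_div_eq_mul_div, div_one, mul_comm]
  have h2 : (Real.log r) ^ k ≤ ((k:ℝ)+1) ^ k * r := by
    calc (Real.log r) ^ k ≤ (((k:ℝ)+1) * r ^ (1/((k:ℝ)+1))) ^ k := pow_le_pow_left₀ hL0 h1 k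
      _ = ((k:ℝ)+1) ^ k * (r ^ (1/((k:ℝ)+1))) ^ k := mul_pow _ _ k
      _ ≤ ((k:ℝ)+1) ^ k * r := by
          gcongr
          calc (r ^ (1/((k:ℝ)+1))) ^ k = r ^ ((1/((k:ℝ)+1)) * k) := by
                rw [← Real.rpow_natCast (r ^ (1/((k:ℝ)+1))) k, ← Real.rpow_mul (le_of_lt hr0)]
            _ ≤ r ^ (1:ℝ) := by
                apply Real.rpow_le_rpow_of_exponent_le (le_of_lt hr1)
                rw [div_mul_eq_mul_div, one_mul, div_le_one (by positivity)]
                linarith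
            _ = r := Real.rpow_one r
  have hfac : (1:ℝ) ≤ (k.factorial : ℝ) := by exact_mod_cast Nat.one_le_iff_ne_zero.mpr k.factorial_ne_zero
  have hnorm : ‖GG k x‖ = (Real.log r) ^ k / (k.factorial : ℝ) / r ^ 2 * r := by
    rw [GG, norm_smul, Real.norm_eq_abs, abs_of_nonneg (by positivity)]
  rw [hnorm]
  calc (Real.log r) ^ k / (k.factorial : ℝ) / r ^ 2 * r
      = (Real.log r) ^ k / ((k.factorial : ℝ) * r) := by field_simp
    _ ≤ (((k:ℝ)+1) ^ k * r) / (1 * r) := by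
        apply div_le_div₀ (by positivity) h2 (by positivity) (by nlinarith)
    _ = ((k:ℝ)+1) ^ k := by field_simp

lemma log_pow_integral (k : ℕ) {r : ℝ} (hr : 1 < r) :
    ∫ t in Set.Ioo (r⁻¹) 1, (Real.log (t * r)) ^ k / t
      = (Real.log r) ^ (k + 1) / (k + 1) := by
  have hr0 : (0:ℝ) < r := lt_trans one_pos hr
  have hinv : r⁻¹ < 1 := inv_lt_one_of_one_lt₀ hr
  have hinv0 : (0:ℝ) < r⁻¹ := by positivity
  have huIcc : Set.uIcc (r⁻¹) (1:ℝ) = Set.Icc (r⁻¹) 1 := Set.uIcc_of_le hinv.le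
  have hderiv : ∀ t ∈ Set.uIcc (r⁻¹) (1:ℝ),
      HasDerivAt (fun t => (Real.log (t * r)) ^ (k+1) / (k+1)) ((Real.log (t * r)) ^ k / t) t := by
    intro t ht
    rw [huIcc] at ht
    have ht0 : 0 < t := lt_of_lt_of_le hinv0 ht.1
    have hL : HasDerivAt (fun t : ℝ => Real.log (t * r)) t⁻¹ t := by
      have h1 : HasDerivAt (fun t : ℝ => t * r) r t := by simpa using (hasDerivAt_id t).mul_const r
      have h2 := (Real.hasDerivAt_log (by positivity : t * r ≠ 0)).comp t h1
      have e : t⁻¹ = (t * r)⁻¹ * r := by rw [mul_inv, mul_assoc, inv_mul_cancel₀ hr0.ne', mul_one]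
      rw [e]; exact h2
    have h3 := ((hasDerivAt_pow (k+1) (Real.log (t * r))).comp t hL).div_const ((k:ℝ)+1)
    have hk : (k:ℝ) + 1 ≠ 0 := by positivity
    have e : Real.log (t * r) ^ k / t = ((k + 1 : ℕ) : ℝ) * Real.log (t * r) ^ (k + 1 - 1) * t⁻¹ / ((k:ℝ) + 1) := by
      rw [Nat.add_sub_cancel, Nat.cast_add, Nat.cast_one, mul_assoc, mul_div_cancel_left₀ _ hk, div_eq_mul_inv]
    rw [e]; exact h3
  have hcont : ContinuousOn (fun t => (Real.log (t * r)) ^ k / t) (Set.uIcc (r⁻¹) (1:ℝ)) := by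
    rw [huIcc]
    apply ContinuousOn.div
    · apply ContinuousOn.pow
      apply ContinuousOn.log
      · exact (continuous_id.mul continuous_const).continuousOn
      · intro t ht
        have : 0 < t := lt_of_lt_of_le hinv0 ht.1
        positivity
    · exact continuousOn_id
    · intro t ht
      exact ne_of_gt (lt_of_lt_of_le hinv0 ht.1)
  have hii : IntervalIntegrable (fun t => (Real.log (t * r)) ^ k / t) volume (r⁻¹) 1 :=
    hcont.intervalIntegrable
  have hftc := intervalIntegral.integral_eq_sub_of_hasDerivAt hderiv hii
  rw [intervalIntegral.integral_of_le hinv.le, integral_Ioc_eq_integral_Ioo] at hftc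
  rw [hftc, one_mul, inv_mul_cancel₀ (ne_of_gt hr0), Real.log_one]
  rw [zero_pow (Nat.succ_ne_zero k)]
  push_cast
  ring

lemma inner_calc (k : ℕ) {x : E} (hx : 1 < ‖x‖) :
    ∫ t in Set.Ioo (0:ℝ) 1, ({y : E | 1 < ‖y‖}).indicator (GG k) (t • x) = GG (k + 1) x := by
  set r := ‖x‖ with hr
  have hr1 : (1:ℝ) < r := hx
  have hr0 : (0:ℝ) < r := lt_trans one_pos hr1
  have hx0 : x ≠ 0 := by intro h; rw [hr, h, norm_zero] at hr1; linarith
  have hstep1 : ∀ t ∈ Set.Ioo (0:ℝ) 1,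
      ({y : E | 1 < ‖y‖}).indicator (GG k) (t • x)
        = (Set.Ioo (r⁻¹) 1).indicator (fun t => ((Real.log (t * r)) ^ k / (k.factorial * t * r ^ 2)) • x) t := by
    intro t ht
    have ht0 : 0 < t := ht.1
    have hnorm : ‖t • x‖ = t * r := by
      rw [norm_smul, Real.norm_eq_abs, abs_of_pos ht0]
    by_cases hmem : 1 < t * r
    · have h1 : t • x ∈ {y : E | 1 < ‖y‖} := by simpa [Set.mem_setOf_eq, hnorm] using hmem
      have h2 : t ∈ Set.Ioo (r⁻¹) 1 := ⟨(inv_lt_iff_one_lt_mul₀ hr0).mpr (by linarith [mul_comm t r]), ht.2⟩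
      rw [Set.indicator_of_mem h1, Set.indicator_of_mem h2, GG, hnorm, smul_smul]
      congr 1
      have hfk : ((k.factorial : ℝ)) ≠ 0 := Nat.cast_ne_zero.mpr k.factorial_ne_zero
      have htr : (0:ℝ) < t * r := lt_trans one_pos hmem
      rw [div_div, div_mul_eq_mul_div,
        div_eq_div_iff (mul_ne_zero hfk (pow_ne_zero 2 htr.ne'))
          (mul_ne_zero (mul_ne_zero hfk ht0.ne') (pow_ne_zero 2 hr0.ne'))]
      ring
    · have h1 : t • x ∉ {y : E | 1 < ‖y‖} := by simpa [Set.mem_setOf_eq, hnorm] using hmem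
      have h2 : t ∉ Set.Ioo (r⁻¹) 1 := by
        intro h
        have := (inv_lt_iff_one_lt_mul₀ hr0).mp h.1
        exact hmem (by linarith [mul_comm r t])
      rw [Set.indicator_of_notMem h1, Set.indicator_of_notMem h2]
  rw [setIntegral_congr_fun measurableSet_Ioo hstep1]
  rw [integral_indicator measurableSet_Ioo, Measure.restrict_restrict measurableSet_Ioo]
  have hss : Set.Ioo (r⁻¹) 1 ∩ Set.Ioo (0:ℝ) 1 = Set.Ioo (r⁻¹) 1 := by
    apply Set.inter_eq_left.mpr
    exact Set.Ioo_subset_Ioo (by positivity) le_rfl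
  rw [hss]
  have hpull : ∀ t : ℝ, ((Real.log (t * r)) ^ k / (k.factorial * t * r ^ 2)) • x
      = ((k.factorial * r ^ 2 : ℝ))⁻¹ • (((Real.log (t * r)) ^ k / t) • x) := by
    intro t
    rw [smul_smul]
    congr 1
    have hfk : ((k.factorial : ℝ)) ≠ 0 := Nat.cast_ne_zero.mpr k.factorial_ne_zero
    rcases eq_or_ne t 0 with h | h
    · simp [h]
    · rw [inv_mul_eq_div, div_div,
        div_eq_div_iff (mul_ne_zero (mul_ne_zero hfk h) (pow_ne_zero 2 hr0.ne'))
          (mul_ne_zero h (mul_ne_zero hfk (pow_ne_zero 2 hr0.ne')))]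
      ring
  simp_rw [hpull]
  rw [integral_smul, integral_smul_const, log_pow_integral k hr1]
  rw [GG, smul_smul]
  congr 1
  rw [Nat.factorial_succ]
  have hfk : ((k.factorial : ℝ)) ≠ 0 := Nat.cast_ne_zero.mpr k.factorial_ne_zero
  push_cast
  field_simp
  rw [← hr]; ring

instance : IsFiniteMeasure (volume.restrict (Set.Ioo (0:ℝ) 1)) :=
  ⟨by simp [Real.volume_Ioo]⟩

lemma GG_int (k : ℕ) (ρ : Measure E) [IsFiniteMeasure ρ]
    (hρ : ρ = ρ.restrict {x : E | 1 < ‖x‖}) : Integrable (GG k) ρ := by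
  refine Integrable.mono' (integrable_const (((k:ℝ)+1) ^ k)) (GG_meas k).aestronglyMeasurable ?_
  rw [hρ]
  filter_upwards [ae_restrict_mem hSmeas] with x hx
  exact GG_bound k hx

lemma step_main (ρ : Measure E) [IsFiniteMeasure ρ]
    (hρ : ρ = ρ.restrict {x : E | 1 < ‖x‖}) (k : ℕ) :
    ∫ x, GG k x ∂((((volume.restrict (Set.Ioo (0:ℝ) 1)).prod ρ).map
        (fun p : ℝ × E => p.1 • p.2)).restrict {x : E | 1 < ‖x‖})
      = ∫ x, GG (k+1) x ∂ρ := by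
  set S : Set E := {x : E | 1 < ‖x‖} with hS
  set pr : ℝ × E → E := fun p => p.1 • p.2 with hpr
  have hprm : Measurable pr := (continuous_fst.smul continuous_snd).measurable
  set P := (volume.restrict (Set.Ioo (0:ℝ) 1)).prod ρ with hP
  have hindm : Measurable (S.indicator (GG k)) := (GG_meas k).indicator hSmeas
  have h1 : ∫ x, GG k x ∂((P.map pr).restrict S) = ∫ x, S.indicator (GG k) x ∂(P.map pr) :=
    (integral_indicator hSmeas).symm
  have h2 : ∫ x, S.indicator (GG k) x ∂(P.map pr) = ∫ p, S.indicator (GG k) (pr p) ∂P :=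
    integral_map hprm.aemeasurable hindm.stronglyMeasurable.aestronglyMeasurable
  have hint : Integrable (fun p : ℝ × E => S.indicator (GG k) (pr p)) P := by
    refine Integrable.mono' (integrable_const (((k:ℝ)+1) ^ k))
      ((hindm.comp hprm).stronglyMeasurable.aestronglyMeasurable)
      (Filter.Eventually.of_forall fun p => ?_)
    by_cases hp : pr p ∈ S
    · rw [Set.indicator_of_mem hp]
      exact GG_bound k hp
    · rw [Set.indicator_of_notMem hp]
      simp only [norm_zero]
      positivity
  have h3 : ∫ p, S.indicator (GG k) (pr p) ∂P
      = ∫ x, (∫ t in Set.Ioo (0:ℝ) 1, S.indicator (GG k) (t • x)) ∂ρ := by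
    rw [MeasureTheory.integral_prod _ hint]
    exact MeasureTheory.integral_integral_swap (f := fun t x => S.indicator (GG k) (t • x)) hint
  have h4 : ∫ x, (∫ t in Set.Ioo (0:ℝ) 1, S.indicator (GG k) (t • x)) ∂ρ
      = ∫ x, GG (k+1) x ∂ρ := by
    rw [hρ]
    refine integral_congr_ae ?_
    filter_upwards [ae_restrict_mem hSmeas] with x hx
    exact inner_calc k hx
  rw [h1, h2, h3, h4]

lemma gamma_scalar (m : ℕ) (hm : 1 ≤ m) {r : ℝ} (hr : 1 < r) :
    (Real.Gamma m)⁻¹ * incGamma m (2 * Real.log r)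
      = (∑ j ∈ Finset.range m, (2 * Real.log r) ^ j / (j.factorial : ℝ)) / r ^ 2 := by
  obtain ⟨n, rfl⟩ : ∃ n, m = n + 1 := ⟨m - 1, by omega⟩
  have hr0 : (0:ℝ) < r := lt_trans one_pos hr
  set y := 2 * Real.log r with hy
  have hy0 : 0 ≤ y := by
    have := Real.log_nonneg hr.le
    positivity
  have hexp : Real.exp (-y) = (r ^ 2)⁻¹ := by
    rw [Real.exp_neg]
    congr 1
    rw [hy, two_mul, Real.exp_add, Real.exp_log hr0, sq]
  have hG : Real.Gamma ((n + 1 : ℕ) : ℝ) = (n.factorial : ℝ) := by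
    rw [Nat.cast_add, Nat.cast_one]
    exact Real.Gamma_nat_eq_factorial n
  rw [hG, incGamma_nat_eq n y hy0, hexp]
  have hfk : ((n.factorial : ℝ)) ≠ 0 := Nat.cast_ne_zero.mpr n.factorial_ne_zero
  rw [Finset.sum_div]
  rw [show ∑ j ∈ Finset.range (n+1), (n.factorial / j.factorial : ℝ) * y ^ j
      = (n.factorial : ℝ) * ∑ j ∈ Finset.range (n+1), y ^ j / (j.factorial : ℝ) by
    rw [Finset.mul_sum]; exact Finset.sum_congr rfl fun j _ => by ring]
  rw [Finset.mul_sum, Finset.mul_sum, Finset.mul_sum]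
  exact Finset.sum_congr rfl fun j _ => by field_simp


end Aux

/-- Let `E` be a real separable Banach space and `M` a Borel measure on
`E ∖ {0}` with `M({x : ‖x‖ > 1}) < ∞`; fix `a ∈ E`. With `M^{<0>} := M`,
`M^{<j+1>}(A) := ∫_0^1 M^{<j>}(t⁻¹A) dt`, `a^{<0>} := a` and
`a^{<j+1>} := (1/2)(a^{<j>} + ∫_{‖x‖>1} x ‖x‖⁻² M^{<j>}(dx))`, for every integer `m ≥ 1`:
`a^{<m>} = 2^{-m}(a + ∫_{‖x‖>1} x ‖x‖⁻² ∑_{j=0}^{m-1} (2 ln ‖x‖)^j / j! M(dx))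
        = 2^{-m}(a + (1/Γ(m)) ∫_{‖x‖>1} x Γ(m, 2 ln ‖x‖) M(dx))`. -/
theorem shift_vector_iterated
    {E : Type*} [NormedAddCommGroup E] [NormedSpace ℝ E] [CompleteSpace E]
    [MeasurableSpace E] [BorelSpace E] [SecondCountableTopology E]
    (M : Measure E) (hM : M {x : E | 1 < ‖x‖} < ⊤)
    (Mit : ℕ → Measure E) (h0 : Mit 0 = M)
    (hstep : ∀ j : ℕ, ∀ A : Set E, MeasurableSet A → A ⊆ {(0:E)}ᶜ →
        Mit (j + 1) A = ∫⁻ t in Set.Ioo (0:ℝ) 1, Mit j ((fun x => t • x) ⁻¹' A))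
    (a : E) (av : ℕ → E) (hav0 : av 0 = a)
    (havstep : ∀ j : ℕ, av (j + 1) =
        (2 : ℝ)⁻¹ • (av j + ∫ x in {x : E | 1 < ‖x‖}, (‖x‖ ^ 2)⁻¹ • x ∂(Mit j)))
    (m : ℕ) (hm : 1 ≤ m) :
    (av m = ((2 : ℝ) ^ m)⁻¹ •
        (a + ∫ x in {x : E | 1 < ‖x‖},
          ((∑ j ∈ Finset.range m, (2 * Real.log ‖x‖) ^ j / (j.factorial : ℝ)) / ‖x‖ ^ 2) • x ∂M))
    ∧ (av m = ((2 : ℝ) ^ m)⁻¹ •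
        (a + (Real.Gamma m)⁻¹ •
          ∫ x in {x : E | 1 < ‖x‖}, incGamma m (2 * Real.log ‖x‖) • x ∂M)) := by
  
  have hSm : MeasurableSet {x : E | 1 < ‖x‖} := hSmeas
  have hπm : Measurable (fun p : ℝ × E => p.1 • p.2) :=
    (continuous_fst.smul continuous_snd).measurable
  -- joint induction: finiteness and integral transfer
  have key : ∀ j : ℕ, IsFiniteMeasure ((Mit j).restrict {x : E | 1 < ‖x‖}) ∧
      ∀ k : ℕ, ∫ x, GG k x ∂((Mit j).restrict {x : E | 1 < ‖x‖})
        = ∫ x, GG (k + j) x ∂((Mit 0).restrict {x : E | 1 < ‖x‖}) := by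
    intro j
    induction j with
    | zero =>
      constructor
      · exact ⟨by rw [Measure.restrict_apply_univ, h0]; exact hM⟩
      · intro k; rfl
    | succ j ih =>
      obtain ⟨hfin, hform⟩ := ih
      haveI := hfin
      have hρ : (Mit j).restrict {x : E | 1 < ‖x‖}
          = ((Mit j).restrict {x : E | 1 < ‖x‖}).restrict {x : E | 1 < ‖x‖} := by
        rw [Measure.restrict_restrict hSm, Set.inter_self]
      have hAeq : (Mit (j+1)).restrict {x : E | 1 < ‖x‖}
          = ((((volume.restrict (Set.Ioo (0:ℝ) 1)).prod ((Mit j).restrict {x : E | 1 < ‖x‖})).map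
              (fun p : ℝ × E => p.1 • p.2)).restrict {x : E | 1 < ‖x‖}) := by
        ext A hA
        rw [Measure.restrict_apply hA, Measure.restrict_apply hA,
          Measure.map_apply hπm (hA.inter hSm),
          Measure.prod_apply (hπm (hA.inter hSm)),
          hstep j (A ∩ {x : E | 1 < ‖x‖}) (hA.inter hSm)
            (fun x hx => by
              simp only [Set.mem_compl_iff, Set.mem_singleton_iff]
              intro h
              have h2 : (1:ℝ) < ‖x‖ := hx.2
              rw [h, norm_zero] at h2
              linarith)]
        refine setLIntegral_congr_fun measurableSet_Ioo
          (fun t ht => ?_)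
        have hBm : MeasurableSet ((fun x : E => t • x) ⁻¹' (A ∩ {x : E | 1 < ‖x‖})) :=
          (hA.inter hSm).preimage (measurable_const_smul t)
        have hsub : ((fun x : E => t • x) ⁻¹' (A ∩ {x : E | 1 < ‖x‖})) ⊆ {x : E | 1 < ‖x‖} := by
          intro x hx
          have h1 : (1:ℝ) < ‖t • x‖ := hx.2
          rw [norm_smul, Real.norm_eq_abs, abs_of_pos ht.1] at h1
          have : t * ‖x‖ ≤ 1 * ‖x‖ := by
            apply mul_le_mul_of_nonneg_right (le_of_lt ht.2) (norm_nonneg x)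
          simp only [Set.mem_setOf_eq]
          linarith [one_mul ‖x‖]
        have hre : (Prod.mk t ⁻¹' ((fun p : ℝ × E => p.1 • p.2) ⁻¹' (A ∩ {x : E | 1 < ‖x‖})))
            = (fun x : E => t • x) ⁻¹' (A ∩ {x : E | 1 < ‖x‖}) := rfl
        rw [hre, Measure.restrict_apply hBm, Set.inter_eq_left.mpr hsub]
      have hfin' : IsFiniteMeasure ((Mit (j+1)).restrict {x : E | 1 < ‖x‖}) := by
        constructor
        rw [hAeq, Measure.restrict_apply_univ,
          Measure.map_apply hπm hSm]
        exact lt_of_le_of_lt (measure_mono (Set.subset_univ _)) (measure_lt_top _ _)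
      refine ⟨hfin', fun k => ?_⟩
      rw [hAeq, step_main _ hρ, hform (k+1), show k + 1 + j = k + (j + 1) by omega]
  haveI hfin0 : IsFiniteMeasure ((Mit 0).restrict {x : E | 1 < ‖x‖}) := (key 0).1
  have hρ0 : (Mit 0).restrict {x : E | 1 < ‖x‖}
      = ((Mit 0).restrict {x : E | 1 < ‖x‖}).restrict {x : E | 1 < ‖x‖} := by
    rw [Measure.restrict_restrict hSm, Set.inter_self]
  have hI : ∀ j : ℕ, (∫ x in {x : E | 1 < ‖x‖}, (‖x‖ ^ 2)⁻¹ • x ∂(Mit j))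
      = ∫ x in {x : E | 1 < ‖x‖}, GG j x ∂(Mit 0) := by
    intro j
    have h1 : (∫ x in {x : E | 1 < ‖x‖}, (‖x‖ ^ 2)⁻¹ • x ∂(Mit j))
        = ∫ x in {x : E | 1 < ‖x‖}, GG 0 x ∂(Mit j) := by
      refine integral_congr_ae (Filter.Eventually.of_forall fun x => ?_)
      simp [GG]
    rw [h1, (key j).2 0, Nat.zero_add]
  have hAV : ∀ p : ℕ, av p = ((2:ℝ)^p)⁻¹ •
      (a + ∑ j ∈ Finset.range p, (2:ℝ)^j • ∫ x in {x : E | 1 < ‖x‖}, GG j x ∂(Mit 0)) := by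
    intro p
    induction p with
    | zero => simp [hav0]
    | succ p ih =>
      rw [havstep p, ih, hI p, Finset.sum_range_succ]
      match_scalars <;> · field_simp; ring
  have hIint : ∀ j : ℕ, Integrable (GG j) ((Mit 0).restrict {x : E | 1 < ‖x‖}) :=
    fun j => GG_int j _ hρ0
  have hsum : (∑ j ∈ Finset.range m, (2:ℝ)^j • ∫ x in {x : E | 1 < ‖x‖}, GG j x ∂(Mit 0))
      = ∫ x in {x : E | 1 < ‖x‖},
          ((∑ j ∈ Finset.range m, (2 * Real.log ‖x‖) ^ j / (j.factorial : ℝ)) / ‖x‖ ^ 2) • x ∂(Mit 0) := by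
    have h1 : ∀ j ∈ Finset.range m, (2:ℝ)^j • ∫ x in {x : E | 1 < ‖x‖}, GG j x ∂(Mit 0)
        = ∫ x in {x : E | 1 < ‖x‖}, (2:ℝ)^j • GG j x ∂(Mit 0) :=
      fun j _ => (integral_smul _ _).symm
    rw [Finset.sum_congr rfl h1,
      show (∑ j ∈ Finset.range m, ∫ x in {x : E | 1 < ‖x‖}, (2:ℝ)^j • GG j x ∂(Mit 0))
          = ∫ x in {x : E | 1 < ‖x‖}, ∑ j ∈ Finset.range m, (2:ℝ)^j • GG j x ∂(Mit 0) from
        (integral_finset_sum _ (fun j _ => Integrable.smul ((2:ℝ)^j) (hIint j))).symm]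
    refine integral_congr_ae ?_
    filter_upwards [ae_restrict_mem hSm] with x hx
    have hterm : ∀ j : ℕ, (2:ℝ)^j • GG j x
        = ((2 * Real.log ‖x‖) ^ j / (j.factorial : ℝ) / ‖x‖^2) • x := by
      intro j
      rw [GG, smul_smul]
      congr 1
      rw [mul_pow]
      ring
    simp_rw [hterm]
    rw [← Finset.sum_smul]
    congr 1
    rw [Finset.sum_div]
  have part1 : av m = ((2 : ℝ) ^ m)⁻¹ •
      (a + ∫ x in {x : E | 1 < ‖x‖},
        ((∑ j ∈ Finset.range m, (2 * Real.log ‖x‖) ^ j / (j.factorial : ℝ)) / ‖x‖ ^ 2) • x ∂M) := by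
    rw [hAV m, hsum, h0]
  refine ⟨part1, ?_⟩
  rw [part1]
  congr 2
  rw [← integral_smul]
  symm
  refine integral_congr_ae ?_
  filter_upwards [ae_restrict_mem hSm] with x hx
  rw [smul_smul, gamma_scalar m hm hx]
end

section
/- For every integer m ≥ 1, every Borel set D of the unit sphere {u ∈ E : ‖u‖ = 1} and every r > 0, M^{<m>}({x : ‖x‖ > r and x/‖x‖ ∈ D}) = (1/(m−1)!) · r · ∫_r^∞ (ln w − ln r)^{m−1} · M({x : ‖x‖ > w and x/‖x‖ ∈ D}) · w^{−2} dw, the equality holding in [0,∞]. -/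
open MeasureTheory Real ENNReal

lemma lint_image_deriv {s : Set ℝ} {f f' : ℝ → ℝ} (hs : MeasurableSet s)
    (hf' : ∀ x ∈ s, HasDerivWithinAt f (f' x) s x) (hf : Set.InjOn f s) (g : ℝ → ℝ≥0∞) :
    ∫⁻ x in f '' s, g x = ∫⁻ x in s, ENNReal.ofReal |f' x| * g (f x) := by
  simpa only [ContinuousLinearMap.det_toSpanSingleton] using
    lintegral_image_eq_lintegral_abs_det_fderiv_mul volume hs
      (fun x hx => (hf' x hx).hasFDerivWithinAt) hf g

lemma lint_Ioo_subst (r : ℝ) (hr : 0 < r) (g : ℝ → ℝ≥0∞) :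
    ∫⁻ t in Set.Ioo (0:ℝ) 1, g t
      = ∫⁻ w in Set.Ioi r, ENNReal.ofReal (r / w ^ 2) * g (r / w) := by
  have himg : (fun w : ℝ => r / w) '' Set.Ioi r = Set.Ioo 0 1 := by
    ext t
    constructor
    · rintro ⟨w, hw, rfl⟩
      exact ⟨div_pos hr (hr.trans hw), (div_lt_one (hr.trans hw)).2 hw⟩
    · rintro ⟨h0, h1⟩
      refine ⟨r / t, ?_, ?_⟩
      · rw [Set.mem_Ioi, lt_div_iff₀ h0]
        nlinarith
      · field_simp
  have hderiv : ∀ w ∈ Set.Ioi r,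
      HasDerivWithinAt (fun w : ℝ => r / w) (-(r / w ^ 2)) (Set.Ioi r) w := by
    intro w hw
    have hw0 : w ≠ 0 := (hr.trans hw).ne'
    simp only [div_eq_mul_inv]
    have := ((hasDerivAt_inv hw0).const_mul r).hasDerivWithinAt (s := Set.Ioi r)
    exact this.congr_deriv (by ring)
  have hinj : Set.InjOn (fun w : ℝ => r / w) (Set.Ioi r) := by
    intro a ha b hb h
    simp only at h
    have ha0 : a ≠ 0 := (hr.trans ha).ne'
    have hb0 : b ≠ 0 := (hr.trans hb).ne'
    have := congrArg (fun y => r / y) h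
    rwa [div_div_cancel₀ hr.ne', div_div_cancel₀ hr.ne'] at this
  rw [← himg, lint_image_deriv measurableSet_Ioi hderiv hinj g]
  refine lintegral_congr fun w => ?_
  rw [abs_neg, abs_of_nonneg (div_nonneg hr.le (sq_nonneg w))]

lemma log_pow_integral_s9 (k : ℕ) {s v : ℝ} (hs : 0 < s) (hsv : s ≤ v) :
    ∫ w in s..v, (Real.log v - Real.log w) ^ k / w
      = (Real.log v - Real.log s) ^ (k + 1) / (k + 1) := by
  have hpos : ∀ w ∈ Set.uIcc s v, (0:ℝ) < w := by
    intro w hw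
    rw [Set.uIcc_of_le hsv] at hw
    exact lt_of_lt_of_le hs hw.1
  have hderiv : ∀ w ∈ Set.uIcc s v,
      HasDerivAt (fun w => -((Real.log v - Real.log w) ^ (k + 1) / (k + 1)))
        ((Real.log v - Real.log w) ^ k / w) w := by
    intro w hw
    have hw0 : w ≠ 0 := (hpos w hw).ne'
    have h1 : HasDerivAt (fun w => Real.log v - Real.log w) (-w⁻¹) w :=
      (Real.hasDerivAt_log hw0).const_sub _
    have h2 := (h1.pow (k + 1)).div_const ((k : ℝ) + 1)
    have h3 := h2.neg
    refine h3.congr_deriv ?_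
    push_cast
    have hk : (k:ℝ) + 1 ≠ 0 := by positivity
    field_simp
  have hcont : ContinuousOn (fun w => (Real.log v - Real.log w) ^ k / w) (Set.uIcc s v) := by
    refine ContinuousOn.div ?_ continuousOn_id fun w hw => (hpos w hw).ne'
    exact (continuousOn_const.sub (Real.continuousOn_log.mono fun w hw => (hpos w hw).ne')).pow k
  rw [intervalIntegral.integral_eq_sub_of_hasDerivAt hderiv hcont.intervalIntegrable]
  simp [sub_self]

lemma inner_calc_s9 (k : ℕ) {s v : ℝ} (hs : 0 < s) (hsv : s < v) {c : ℝ} (hc : 0 ≤ c) :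
    ∫⁻ w in Set.Ioo s v, ENNReal.ofReal (c * ((Real.log v - Real.log w) ^ k / w))
      = ENNReal.ofReal (c * ((Real.log v - Real.log s) ^ (k + 1) / (k + 1))) := by
  have hcont : ContinuousOn (fun w => c * ((Real.log v - Real.log w) ^ k / w)) (Set.Icc s v) := by
    refine continuousOn_const.mul (ContinuousOn.div ?_ continuousOn_id
      fun w hw => (lt_of_lt_of_le hs hw.1).ne')
    exact (continuousOn_const.sub (Real.continuousOn_log.mono
      fun w hw => (lt_of_lt_of_le hs hw.1).ne')).pow k
  have hint : IntegrableOn (fun w => c * ((Real.log v - Real.log w) ^ k / w)) (Set.Ioo s v) :=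
    (hcont.integrableOn_Icc).mono_set Set.Ioo_subset_Icc_self
  have hnn : 0 ≤ᵐ[volume.restrict (Set.Ioo s v)]
      fun w => c * ((Real.log v - Real.log w) ^ k / w) := by
    refine (ae_restrict_iff' measurableSet_Ioo).2 (ae_of_all _ fun w hw => ?_)
    have hw0 : 0 < w := hs.trans hw.1
    refine mul_nonneg hc (div_nonneg (pow_nonneg ?_ k) hw0.le)
    rw [sub_nonneg]
    exact (Real.log_le_log_iff hw0 (hs.trans hsv)).2 hw.2.le
  rw [← ofReal_integral_eq_lintegral_ofReal hint hnn]
  congr 1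
  rw [← MeasureTheory.integral_Ioc_eq_integral_Ioo, ← intervalIntegral.integral_of_le hsv.le,
    intervalIntegral.integral_const_mul, log_pow_integral_s9 k hs hsv.le]

private lemma ennreal_shuffle (a b c d : ℝ≥0∞) : a * (b * (c * d)) = c * (a * (b * d)) := by
  ring


/-- Let `E` be a real separable Banach space and `M` a Borel measure on
`E ∖ {0}`. With `M^{<0>} := M` and `M^{<j+1>}(A) := ∫_0^1 M^{<j>}(t⁻¹A) dt`, for every
integer `m ≥ 1`, every Borel subset `D` of the unit sphere and every `r > 0`:
`M^{<m>}({x : ‖x‖ > r, x/‖x‖ ∈ D})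
  = (1/(m-1)!) r ∫_r^∞ (ln w - ln r)^(m-1) M({x : ‖x‖ > w, x/‖x‖ ∈ D}) w⁻² dw`,
the equality holding in `[0,∞]`. -/
theorem iterated_levy_spectral_function
    {E : Type*} [NormedAddCommGroup E] [NormedSpace ℝ E] [CompleteSpace E]
    [MeasurableSpace E] [BorelSpace E] [SecondCountableTopology E]
    (M : Measure E)
    (Mit : ℕ → Measure E) (h0 : Mit 0 = M)
    (hstep : ∀ j : ℕ, ∀ A : Set E, MeasurableSet A → A ⊆ {(0:E)}ᶜ →
        Mit (j + 1) A = ∫⁻ t in Set.Ioo (0:ℝ) 1, Mit j ((fun x => t • x) ⁻¹' A))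
    (m : ℕ) (hm : 1 ≤ m)
    (D : Set E) (hD : MeasurableSet D) (hDS : D ⊆ {u : E | ‖u‖ = 1})
    (r : ℝ) (hr : 0 < r) :
    Mit m {x : E | r < ‖x‖ ∧ ‖x‖⁻¹ • x ∈ D}
      = ENNReal.ofReal (r / ((m - 1).factorial : ℝ)) *
        ∫⁻ w in Set.Ioi r,
          M {x : E | w < ‖x‖ ∧ ‖x‖⁻¹ • x ∈ D} *
            ENNReal.ofReal ((Real.log w - Real.log r) ^ (m - 1) / w ^ 2) := by
  have measA : ∀ s : ℝ, MeasurableSet {x : E | s < ‖x‖ ∧ ‖x‖⁻¹ • x ∈ D} := by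
    intro s
    have hsm : Measurable fun x : E => ‖x‖⁻¹ • x := measurable_norm.inv.smul measurable_id
    exact (measurableSet_lt measurable_const measurable_norm).inter (hsm hD)
  have subA : ∀ s : ℝ, {x : E | s < ‖x‖ ∧ ‖x‖⁻¹ • x ∈ D} ⊆ {(0:E)}ᶜ := by
    intro s x hx
    simp only [Set.mem_compl_iff, Set.mem_singleton_iff]
    rintro rfl
    have := hDS hx.2
    simp at this
  have hφ : Measurable fun w : ℝ => M {x : E | w < ‖x‖ ∧ ‖x‖⁻¹ • x ∈ D} := by
    have : Antitone fun w : ℝ => M {x : E | w < ‖x‖ ∧ ‖x‖⁻¹ • x ∈ D} :=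
      fun a b hab => measure_mono fun x hx => ⟨hab.trans_lt hx.1, hx.2⟩
    exact this.measurable
  have preA : ∀ s t : ℝ, 0 < t →
      (fun x : E => t • x) ⁻¹' {x : E | s < ‖x‖ ∧ ‖x‖⁻¹ • x ∈ D}
        = {x : E | s / t < ‖x‖ ∧ ‖x‖⁻¹ • x ∈ D} := by
    intro s t ht
    ext x
    have hnorm : ‖t • x‖ = t * ‖x‖ := by rw [norm_smul, Real.norm_eq_abs, abs_of_pos ht]
    have hsm : ‖t • x‖⁻¹ • (t • x) = ‖x‖⁻¹ • x := by
      rw [hnorm, mul_inv, smul_smul, mul_comm t⁻¹, mul_assoc, inv_mul_cancel₀ ht.ne', mul_one]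
    simp only [Set.mem_preimage, Set.mem_setOf_eq]
    rw [hsm, hnorm]
    refine and_congr_left fun _ => ?_
    rw [div_lt_iff₀ ht, mul_comm]
  have hrec : ∀ (j : ℕ) (s : ℝ), 0 < s →
      Mit (j + 1) {x : E | s < ‖x‖ ∧ ‖x‖⁻¹ • x ∈ D}
        = ∫⁻ w in Set.Ioi s,
            ENNReal.ofReal (s / w ^ 2) * Mit j {x : E | w < ‖x‖ ∧ ‖x‖⁻¹ • x ∈ D} := by
    intro j s hs
    rw [hstep j _ (measA s) (subA s),
      lint_Ioo_subst s hs
        fun t => Mit j ((fun x : E => t • x) ⁻¹' {x : E | s < ‖x‖ ∧ ‖x‖⁻¹ • x ∈ D})]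
    refine setLIntegral_congr_fun measurableSet_Ioi (fun w hw => ?_)
    have hw0 : 0 < w := hs.trans hw
    rw [preA _ _ (div_pos hs hw0)]
    congr 3
    rw [div_div_eq_mul_div, mul_comm, mul_div_assoc, div_self hs.ne', mul_one]
  suffices main : ∀ n : ℕ, 1 ≤ n → ∀ s : ℝ, 0 < s →
      Mit n {x : E | s < ‖x‖ ∧ ‖x‖⁻¹ • x ∈ D}
        = ENNReal.ofReal (s / ((n - 1).factorial : ℝ)) *
            ∫⁻ w in Set.Ioi s,
              M {x : E | w < ‖x‖ ∧ ‖x‖⁻¹ • x ∈ D} *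
                ENNReal.ofReal ((Real.log w - Real.log s) ^ (n - 1) / w ^ 2) by
    exact main m hm r hr
  intro n hn
  induction n, hn using Nat.le_induction with
  | base =>
    intro s hs
    rw [hrec 0 s hs, h0]
    simp only [Nat.sub_self, Nat.factorial_zero, Nat.cast_one, pow_zero]
    rw [← lintegral_const_mul' _ _ ENNReal.ofReal_ne_top]
    refine setLIntegral_congr_fun measurableSet_Ioi (fun w hw => ?_)
    rw [mul_comm (M _) _, ← mul_assoc, ← ENNReal.ofReal_mul (by positivity)]
    rw [show s / 1 * (1 / w ^ 2) = s / w ^ 2 by ring]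
  | succ n hn IH =>
    intro s hs
    obtain ⟨k, rfl⟩ : ∃ k, n = k + 1 := ⟨n - 1, (Nat.succ_pred_eq_of_pos hn).symm⟩
    simp only [Nat.add_sub_cancel] at IH ⊢
    set G : ℝ × ℝ → ℝ≥0∞ := fun p =>
      {q : ℝ × ℝ | q.1 < q.2}.indicator
        (fun q => ENNReal.ofReal (s / q.1 ^ 2) *
          (ENNReal.ofReal (q.1 / (k.factorial : ℝ)) *
            (M {x : E | q.2 < ‖x‖ ∧ ‖x‖⁻¹ • x ∈ D} *
              ENNReal.ofReal ((Real.log q.2 - Real.log q.1) ^ k / q.2 ^ 2)))) p with hGdef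
    have hGmeas : Measurable G := by
      refine Measurable.indicator ?_ (measurableSet_lt measurable_fst measurable_snd)
      refine Measurable.mul ?_ (Measurable.mul ?_ (Measurable.mul ?_ ?_))
      · exact (measurable_const.div (measurable_fst.pow_const 2)).ennreal_ofReal
      · exact (measurable_fst.div_const _).ennreal_ofReal
      · exact hφ.comp measurable_snd
      · exact ((((Real.measurable_log.comp measurable_snd).sub
            (Real.measurable_log.comp measurable_fst)).pow_const k).div
            (measurable_snd.pow_const 2)).ennreal_ofReal
    rw [hrec (k + 1) s hs]
    have E1 : ∫⁻ w in Set.Ioi s,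
          ENNReal.ofReal (s / w ^ 2) * Mit (k + 1) {x : E | w < ‖x‖ ∧ ‖x‖⁻¹ • x ∈ D}
        = ∫⁻ w in Set.Ioi s, ∫⁻ v in Set.Ioi s, G (w, v) := by
      refine setLIntegral_congr_fun measurableSet_Ioi (fun w hw => ?_)
      rw [IH w (hs.trans hw)]
      have hGw : (fun v => G (w, v)) = (Set.Ioi w).indicator
          (fun v => ENNReal.ofReal (s / w ^ 2) *
            (ENNReal.ofReal (w / (k.factorial : ℝ)) *
              (M {x : E | v < ‖x‖ ∧ ‖x‖⁻¹ • x ∈ D} *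
                ENNReal.ofReal ((Real.log v - Real.log w) ^ k / v ^ 2)))) := by
        funext v
        simp only [hGdef, Set.indicator, Set.mem_setOf_eq, Set.mem_Ioi]
      rw [hGw, lintegral_indicator measurableSet_Ioi,
        Measure.restrict_restrict measurableSet_Ioi,
        Set.inter_eq_self_of_subset_left (Set.Ioi_subset_Ioi hw.le),
        lintegral_const_mul' _ _ ENNReal.ofReal_ne_top,
        lintegral_const_mul' _ _ ENNReal.ofReal_ne_top]
    rw [E1, lintegral_lintegral_swap hGmeas.aemeasurable]
    have E3 : ∫⁻ v in Set.Ioi s, ∫⁻ w in Set.Ioi s, G (w, v)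
        = ∫⁻ v in Set.Ioi s,
            M {x : E | v < ‖x‖ ∧ ‖x‖⁻¹ • x ∈ D} *
              ENNReal.ofReal ((s / ((k.factorial : ℝ) * v ^ 2)) *
                ((Real.log v - Real.log s) ^ (k + 1) / ((k : ℝ) + 1))) := by
      refine setLIntegral_congr_fun measurableSet_Ioi (fun v hv => ?_)
      have hv0 : 0 < v := hs.trans hv
      have hGv : (fun w => G (w, v)) = (Set.Iio v).indicator
          (fun w => ENNReal.ofReal (s / w ^ 2) *
            (ENNReal.ofReal (w / (k.factorial : ℝ)) *
              (M {x : E | v < ‖x‖ ∧ ‖x‖⁻¹ • x ∈ D} *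
                ENNReal.ofReal ((Real.log v - Real.log w) ^ k / v ^ 2)))) := by
        funext w
        simp only [hGdef, Set.indicator, Set.mem_setOf_eq, Set.mem_Iio]
      rw [hGv, lintegral_indicator measurableSet_Iio,
        Measure.restrict_restrict measurableSet_Iio, Set.Iio_inter_Ioi]
      have hkfac : (0:ℝ) < (k.factorial : ℝ) := by
        exact_mod_cast k.factorial_pos
      have hptw : ∀ w ∈ Set.Ioo s v,
          ENNReal.ofReal (s / w ^ 2) *
            (ENNReal.ofReal (w / (k.factorial : ℝ)) *
              (M {x : E | v < ‖x‖ ∧ ‖x‖⁻¹ • x ∈ D} *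
                ENNReal.ofReal ((Real.log v - Real.log w) ^ k / v ^ 2)))
          = M {x : E | v < ‖x‖ ∧ ‖x‖⁻¹ • x ∈ D} *
              ENNReal.ofReal ((s / ((k.factorial : ℝ) * v ^ 2)) *
                ((Real.log v - Real.log w) ^ k / w)) := by
        intro w hw
        have hw0 : 0 < w := hs.trans hw.1
        rw [ennreal_shuffle]
        congr 1
        rw [← ENNReal.ofReal_mul (by positivity), ← ENNReal.ofReal_mul (by positivity)]
        congr 1
        field_simp
      rw [setLIntegral_congr_fun measurableSet_Ioo hptw,
        lintegral_const_mul'' _ (Measurable.aemeasurable (by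
          exact (measurable_const.mul (((measurable_const.sub
            Real.measurable_log).pow_const k).div measurable_id)).ennreal_ofReal)),
        inner_calc_s9 k hs hv (by positivity)]
    rw [E3, ← lintegral_const_mul' _ _ ENNReal.ofReal_ne_top]
    refine setLIntegral_congr_fun measurableSet_Ioi (fun v hv => ?_)
    have hv0 : 0 < v := hs.trans hv
    have hkfac : (0:ℝ) < (k.factorial : ℝ) := by exact_mod_cast k.factorial_pos
    rw [mul_left_comm]
    congr 1
    rw [← ENNReal.ofReal_mul (by positivity)]
    congr 1
    rw [Nat.factorial_succ]
    push_cast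
    rw [div_mul_div_comm, div_mul_div_comm]
    congr 1 <;> ring
end

section
/- For every Borel set B ⊆ E ∖ {0}, ∫_0^1 M_σ(s^{−1}B) ds = M_{σ₁}(B), where s^{−1}B := {s^{−1}x : x ∈ B} and σ₁ is the finite Borel measure on S × (0,2) given by dσ₁(u,z) = (z+1)^{−1} dσ(u,z). In particular, the class of measures of the form M_σ is invariant under the transform M ↦ (B ↦ ∫_0^1 M(s^{−1}B) ds). -/
open MeasureTheory Real ENNReal

/-- The measure `M_σ` on `E ∖ {0}` associated with a finite Borel measure `σ` on
`S × (0,2)` (modelled as a measure on `E × ℝ` concentrated on the unit sphere times `(0,2)`):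
`M_σ(B) = ∫_{S×(0,2)} (∫_0^∞ 1_B(w·u) w^{-(z+1)} dw) σ(d(u,z))`. -/
noncomputable def Msig {E : Type*} [NormedAddCommGroup E] [NormedSpace ℝ E]
    [MeasurableSpace E] [BorelSpace E] (σ : Measure (E × ℝ)) : Measure E :=
  σ.bind (fun p => Measure.map (fun w : ℝ => w • p.1)
    ((MeasureTheory.volume.restrict (Set.Ioi (0:ℝ))).withDensity
        (fun w => ENNReal.ofReal (w ^ (-(p.2 + 1))))))

set_option linter.unusedSectionVars false
set_option linter.unusedVariables false

section Aux

variable {E : Type*} [NormedAddCommGroup E] [NormedSpace ℝ E]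
    [MeasurableSpace E] [BorelSpace E] [SecondCountableTopology E]

/-- value of the kernel measure on a measurable set, as a lintegral -/
lemma Msig_kernel_apply (p : E × ℝ) {A : Set E} (hA : MeasurableSet A) :
    (Measure.map (fun w : ℝ => w • p.1)
      ((MeasureTheory.volume.restrict (Set.Ioi (0:ℝ))).withDensity
        (fun w => ENNReal.ofReal (w ^ (-(p.2 + 1)))))) A
    = ∫⁻ w in Set.Ioi (0:ℝ),
        A.indicator 1 (w • p.1) * ENNReal.ofReal (w ^ (-(p.2 + 1))) := by
  have hsm : Measurable (fun w : ℝ => w • p.1) :=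
    (continuous_id.smul continuous_const).measurable
  rw [Measure.map_apply hsm hA, withDensity_apply _ (hsm hA),
    ← lintegral_indicator (hsm hA)]
  refine lintegral_congr fun w => ?_
  by_cases h : w • p.1 ∈ A <;>
    simp [Set.indicator, Set.mem_preimage, h]

lemma measurable_gfun {A : Set E} (hA : MeasurableSet A) :
    Measurable (fun p : E × ℝ => ∫⁻ w in Set.Ioi (0:ℝ),
      A.indicator 1 (w • p.1) * ENNReal.ofReal (w ^ (-(p.2 + 1)))) := by
  apply Measurable.lintegral_prod_right'
    (f := fun q : (E × ℝ) × ℝ =>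
      A.indicator 1 (q.2 • q.1.1) * ENNReal.ofReal (q.2 ^ (-(q.1.2 + 1))))
  refine Measurable.mul ?_ ?_
  · exact (measurable_one.indicator hA).comp
      ((continuous_snd.smul (continuous_fst.fst)).measurable)
  · exact (measurable_snd.pow
      (((measurable_fst.snd).add measurable_const).neg)).ennreal_ofReal

lemma measurable_Msig_kernel :
    Measurable (fun p : E × ℝ => Measure.map (fun w : ℝ => w • p.1)
      ((MeasureTheory.volume.restrict (Set.Ioi (0:ℝ))).withDensity
        (fun w => ENNReal.ofReal (w ^ (-(p.2 + 1)))))) := by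
  apply Measure.measurable_of_measurable_coe
  intro s hs
  simp only [fun p : E × ℝ => Msig_kernel_apply p hs]
  exact measurable_gfun hs

lemma Msig_apply (σ : Measure (E × ℝ)) {A : Set E} (hA : MeasurableSet A) :
    Msig σ A = ∫⁻ p, (∫⁻ w in Set.Ioi (0:ℝ),
      A.indicator 1 (w • p.1) * ENNReal.ofReal (w ^ (-(p.2 + 1)))) ∂σ := by
  rw [Msig, Measure.bind_apply hA measurable_Msig_kernel.aemeasurable]
  exact lintegral_congr fun p => Msig_kernel_apply p hA

/-- change of variables `w ↦ s * w` -/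
lemma scaling_identity {s : ℝ} (hs : 0 < s) (u : E) (z : ℝ) {B : Set E}
    (hB : MeasurableSet B) :
    (∫⁻ w in Set.Ioi (0:ℝ),
        ((fun x => s • x) ⁻¹' B).indicator 1 (w • u) * ENNReal.ofReal (w ^ (-(z + 1))))
      = ENNReal.ofReal (s ^ z) *
        ∫⁻ w in Set.Ioi (0:ℝ), B.indicator 1 (w • u) * ENNReal.ofReal (w ^ (-(z + 1))) := by
  have hs0 : s ≠ 0 := ne_of_gt hs
  set f : ℝ → ℝ≥0∞ := fun v =>
    B.indicator 1 (v • u) * ENNReal.ofReal ((s⁻¹ * v) ^ (-(z + 1))) with hf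
  have hfm : Measurable f := by
    refine Measurable.mul ?_ ?_
    · exact (measurable_one.indicator hB).comp
        (continuous_id.smul continuous_const).measurable
    · exact ((measurable_const_mul s⁻¹).pow measurable_const).ennreal_ofReal
  -- step 1: the LHS integrand is `f (s * w)`
  have h1 : (∫⁻ w in Set.Ioi (0:ℝ),
      ((fun x => s • x) ⁻¹' B).indicator 1 (w • u) * ENNReal.ofReal (w ^ (-(z + 1))))
      = ∫⁻ w in Set.Ioi (0:ℝ), f (s * w) := by
    refine lintegral_congr fun w => ?_
    have hv : s⁻¹ * (s * w) = w := by field_simp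
    have hind : ((fun x => s • x) ⁻¹' B).indicator (1 : E → ℝ≥0∞) (w • u)
        = B.indicator 1 ((s * w) • u) := by
      by_cases h : (s * w) • u ∈ B <;>
        simp [Set.indicator, Set.mem_preimage, smul_smul, h]
    rw [hf]; simp only [hv, hind]
  -- step 2: push-forward of the restricted Lebesgue measure under `w ↦ s * w`
  have hmap : Measure.map (fun w : ℝ => s * w) (volume.restrict (Set.Ioi (0:ℝ)))
      = ENNReal.ofReal s⁻¹ • volume.restrict (Set.Ioi (0:ℝ)) := by
    have hpre : (fun w : ℝ => s * w) ⁻¹' (Set.Ioi (0:ℝ)) = Set.Ioi (0:ℝ) := by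
      ext w
      simp only [Set.mem_preimage, Set.mem_Ioi]
      refine ⟨fun h => ?_, fun h => mul_pos hs h⟩
      have h2 := mul_pos (inv_pos.mpr hs) h
      rwa [inv_mul_cancel_left₀ hs0] at h2
    rw [show volume.restrict (Set.Ioi (0:ℝ))
        = volume.restrict ((fun w : ℝ => s * w) ⁻¹' (Set.Ioi (0:ℝ))) by rw [hpre],
      ← Measure.restrict_map (measurable_const_mul s) measurableSet_Ioi,
      Real.map_volume_mul_left hs0]
    rw [abs_of_pos (inv_pos.mpr hs), hpre, Measure.restrict_smul]
  have h2 : (∫⁻ w in Set.Ioi (0:ℝ), f (s * w))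
      = ENNReal.ofReal s⁻¹ * ∫⁻ v in Set.Ioi (0:ℝ), f v := by
    rw [← lintegral_map hfm (measurable_const_mul s), hmap, lintegral_smul_measure, smul_eq_mul]
  -- step 3: simplify `f` on `Ioi 0`
  have h3 : (∫⁻ v in Set.Ioi (0:ℝ), f v)
      = ENNReal.ofReal (s⁻¹ ^ (-(z + 1))) *
        ∫⁻ v in Set.Ioi (0:ℝ), B.indicator 1 (v • u) * ENNReal.ofReal (v ^ (-(z + 1))) := by
    rw [← lintegral_const_mul' _ _ ENNReal.ofReal_ne_top]
    refine setLIntegral_congr_fun measurableSet_Ioi (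
      fun v hv => ?_)
    have hmr : ((s⁻¹ * v) ^ (-(z + 1))) = s⁻¹ ^ (-(z + 1)) * v ^ (-(z + 1)) :=
      Real.mul_rpow (inv_nonneg.mpr hs.le) (le_of_lt hv)
    simp only [hf]
    rw [hmr, ENNReal.ofReal_mul (Real.rpow_nonneg (inv_nonneg.mpr hs.le) _)]
    ring
  rw [h1, h2, h3, ← mul_assoc, ← ENNReal.ofReal_mul (inv_nonneg.mpr hs.le)]
  congr 2
  have hinv : s⁻¹ ^ (-(z + 1)) = s ^ (z + 1) := by
    rw [Real.inv_rpow hs.le, ← Real.rpow_neg hs.le, neg_neg]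
  rw [hinv, Real.rpow_add hs, Real.rpow_one]
  field_simp

lemma lintegral_rpow_Ioo {z : ℝ} (hz : -1 < z) :
    ∫⁻ s in Set.Ioo (0:ℝ) 1, ENNReal.ofReal (s ^ z) = ENNReal.ofReal (z + 1)⁻¹ := by
  have hz1 : (0:ℝ) < z + 1 := by linarith
  rw [Measure.restrict_congr_set Ioo_ae_eq_Ioc]
  have hint : IntegrableOn (fun s : ℝ => s ^ z) (Set.Ioc 0 1) volume := by
    have := intervalIntegral.intervalIntegrable_rpow' (a := 0) (b := 1) hz
    rwa [intervalIntegrable_iff_integrableOn_Ioc_of_le zero_le_one] at this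
  have hnn : 0 ≤ᵐ[volume.restrict (Set.Ioc (0:ℝ) 1)] fun s : ℝ => s ^ z := by
    filter_upwards [ae_restrict_mem measurableSet_Ioc] with s hs
    exact Real.rpow_nonneg hs.1.le _
  rw [← ofReal_integral_eq_lintegral_ofReal hint hnn]
  congr 1
  have : ∫ s in Set.Ioc (0:ℝ) 1, s ^ z = ∫ s in (0:ℝ)..1, s ^ z := by
    rw [intervalIntegral.integral_of_le zero_le_one]
  rw [this, integral_rpow (Or.inl hz), Real.one_rpow,
    Real.zero_rpow (ne_of_gt hz1)]
  norm_num

end Aux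

/-- For every Borel set `B ⊆ E ∖ {0}`,
`∫_0^1 M_σ(s⁻¹B) ds = M_{σ₁}(B)`, where `s⁻¹B = {s⁻¹x : x ∈ B}` and
`dσ₁(u,z) = (z+1)⁻¹ dσ(u,z)`; in particular the class of measures `M_σ` is invariant under
the transform `M ↦ (B ↦ ∫_0^1 M(s⁻¹B) ds)`. -/
theorem Msig_invariant_Jurek_transform
    {E : Type*} [NormedAddCommGroup E] [NormedSpace ℝ E] [CompleteSpace E]
    [MeasurableSpace E] [BorelSpace E] [SecondCountableTopology E]
    (σ : Measure (E × ℝ)) [IsFiniteMeasure σ]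
    (hσ : σ {p : E × ℝ | ‖p.1‖ = 1 ∧ p.2 ∈ Set.Ioo (0:ℝ) 2}ᶜ = 0)
    (B : Set E) (hB : MeasurableSet B) (hB0 : B ⊆ {(0:E)}ᶜ) :
    ∫⁻ s in Set.Ioo (0:ℝ) 1, Msig σ ((fun x => s • x) ⁻¹' B)
      = Msig (σ.withDensity (fun p => ENNReal.ofReal (p.2 + 1)⁻¹)) B := by
  set g : E × ℝ → ℝ≥0∞ := fun p => ∫⁻ w in Set.Ioi (0:ℝ),
      B.indicator 1 (w • p.1) * ENNReal.ofReal (w ^ (-(p.2 + 1))) with hgdef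
  have hgm : Measurable g := measurable_gfun hB
  -- rewrite LHS using Msig_apply and the scaling identity
  have hstep1 : ∫⁻ s in Set.Ioo (0:ℝ) 1, Msig σ ((fun x => s • x) ⁻¹' B)
      = ∫⁻ s in Set.Ioo (0:ℝ) 1, ∫⁻ p, ENNReal.ofReal (s ^ p.2) * g p ∂σ := by
    refine setLIntegral_congr_fun measurableSet_Ioo (
      fun s hs => ?_)
    rw [Msig_apply σ (hB.preimage (measurable_const_smul s))]
    exact lintegral_congr fun p => scaling_identity hs.1 p.1 p.2 hB
  -- Tonelli: swap the two integrals
  have hswap : ∫⁻ s in Set.Ioo (0:ℝ) 1, ∫⁻ p, ENNReal.ofReal (s ^ p.2) * g p ∂σ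
      = ∫⁻ p, (∫⁻ s in Set.Ioo (0:ℝ) 1, ENNReal.ofReal (s ^ p.2) * g p) ∂σ := by
    refine lintegral_lintegral_swap ?_
    refine Measurable.aemeasurable (Measurable.mul ?_ ?_)
    · exact (measurable_fst.pow measurable_snd.snd).ennreal_ofReal
    · exact hgm.comp measurable_snd
  -- the σ-a.e. hypothesis
  have hae : ∀ᵐ p ∂σ, ‖p.1‖ = 1 ∧ p.2 ∈ Set.Ioo (0:ℝ) 2 := hσ
  -- compute the inner integral σ-a.e.
  have hstep2 : ∫⁻ p, (∫⁻ s in Set.Ioo (0:ℝ) 1, ENNReal.ofReal (s ^ p.2) * g p) ∂σ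
      = ∫⁻ p, ENNReal.ofReal (p.2 + 1)⁻¹ * g p ∂σ := by
    refine lintegral_congr_ae ?_
    filter_upwards [hae] with p hp
    have hz : (-1:ℝ) < p.2 := by have := hp.2.1; linarith
    calc ∫⁻ s in Set.Ioo (0:ℝ) 1, ENNReal.ofReal (s ^ p.2) * g p
        = (∫⁻ s in Set.Ioo (0:ℝ) 1, ENNReal.ofReal (s ^ p.2)) * g p := by
          rw [lintegral_mul_const _ ((measurable_id'.pow measurable_const).ennreal_ofReal)]
      _ = ENNReal.ofReal (p.2 + 1)⁻¹ * g p := by rw [lintegral_rpow_Ioo hz]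
  -- rewrite RHS
  have hrhs : Msig (σ.withDensity (fun p => ENNReal.ofReal (p.2 + 1)⁻¹)) B
      = ∫⁻ p, ENNReal.ofReal (p.2 + 1)⁻¹ * g p ∂σ := by
    rw [Msig_apply _ hB]
    exact lintegral_withDensity_eq_lintegral_mul σ
      ((measurable_snd.add measurable_const).inv.ennreal_ofReal) hgm
  rw [hstep1, hswap, hstep2, hrhs]
end

section
/- The logarithmic moment of M_σ outside the unit ball satisfies ∫_{{x : ‖x‖ > 1}} ln‖x‖ · M_σ(dx) = ∫_{S×(0,2)} z^{−2} σ(d(u,z)), the equality holding in [0,∞]; in particular this moment is finite if and only if ∫_{S×(0,2)} z^{−2} dσ < ∞. -/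
open MeasureTheory Real ENNReal
open Filter

lemma aux_tendsto {z : ℝ} (hz : 0 < z) :
    Tendsto (fun x : ℝ => Real.log x * x ^ (-z)) atTop (nhds 0) := by
  have h := (isLittleO_log_rpow_atTop hz).tendsto_div_nhds_zero
  refine h.congr' ?_
  filter_upwards [eventually_gt_atTop (0:ℝ)] with x hx
  rw [div_eq_mul_inv, ← Real.rpow_neg hx.le]

lemma aux_deriv {z : ℝ} (hz : 0 < z) {x : ℝ} (hx : 0 < x) :
    HasDerivAt (fun x : ℝ => -(Real.log x * x ^ (-z)) / z - x ^ (-z) / z ^ 2)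
      (Real.log x * x ^ (-(z + 1))) x := by
  have h1 : HasDerivAt Real.log x⁻¹ x := Real.hasDerivAt_log hx.ne'
  have h2 : HasDerivAt (fun x : ℝ => x ^ (-z)) (-z * x ^ (-z - 1)) x := by
    simpa using Real.hasDerivAt_rpow_const (p := -z) (Or.inl hx.ne')
  have h3 := ((h1.mul h2).neg.div_const z).sub (h2.div_const (z ^ 2))
  refine h3.congr_deriv ?_
  have e1 : x⁻¹ * x ^ (-z) = x ^ (-z - 1) := by
    rw [← Real.rpow_neg_one x, ← Real.rpow_add hx]; ring_nf
  have e2 : (-(z+1)) = -z - 1 := by ring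
  rw [e2, e1]
  field_simp
  ring

lemma aux_tendsto' {z : ℝ} (hz : 0 < z) :
    Filter.Tendsto (fun x : ℝ => -(Real.log x * x ^ (-z)) / z - x ^ (-z) / z ^ 2) atTop
      (nhds 0) := by
  have h := ((aux_tendsto hz).div_const z).neg.sub ((tendsto_rpow_neg_atTop hz).div_const (z^2))
  simp only [zero_div, neg_zero, sub_zero, neg_div] at h ⊢
  exact h

lemma aux_integral {z : ℝ} (hz : 0 < z) :
    ∫ w in Set.Ioi (1:ℝ), Real.log w * w ^ (-(z + 1)) = (z ^ 2)⁻¹ := by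
  have key := integral_Ioi_of_hasDerivAt_of_nonneg' (a := 1)
    (g := fun x : ℝ => -(Real.log x * x ^ (-z)) / z - x ^ (-z) / z ^ 2)
    (g' := fun x : ℝ => Real.log x * x ^ (-(z + 1)))
    (fun x hx => aux_deriv hz (lt_of_lt_of_le one_pos hx))
    (fun x hx => mul_nonneg (Real.log_nonneg (le_of_lt hx))
      (Real.rpow_nonneg (le_of_lt (lt_trans one_pos hx)) _))
    (aux_tendsto' hz)
  simpa [Real.log_one, Real.one_rpow] using key

lemma aux_integrable {z : ℝ} (hz : 0 < z) :
    IntegrableOn (fun w : ℝ => Real.log w * w ^ (-(z + 1))) (Set.Ioi 1) := by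
  exact integrableOn_Ioi_deriv_of_nonneg' (a := 1)
    (fun x hx => aux_deriv hz (lt_of_lt_of_le one_pos hx))
    (fun x hx => mul_nonneg (Real.log_nonneg (le_of_lt hx))
      (Real.rpow_nonneg (le_of_lt (lt_trans one_pos hx)) _))
    (aux_tendsto' hz)

lemma aux_lintegral {z : ℝ} (hz : 0 < z) :
    ∫⁻ w in Set.Ioi (1:ℝ), ENNReal.ofReal (Real.log w * w ^ (-(z + 1)))
      = ENNReal.ofReal ((z ^ 2)⁻¹) := by
  rw [← aux_integral hz, ← ofReal_integral_eq_lintegral_ofReal (aux_integrable hz)]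
  filter_upwards [ae_restrict_mem measurableSet_Ioi] with x hx
  exact mul_nonneg (Real.log_nonneg (le_of_lt hx))
    (Real.rpow_nonneg (le_of_lt (lt_trans one_pos hx)) _)


/-- The logarithmic moment of `M_σ` outside the unit ball satisfies
`∫_{‖x‖>1} ln ‖x‖ M_σ(dx) = ∫_{S×(0,2)} z⁻² σ(d(u,z))`, the equality holding in `[0,∞]`;
in particular the moment is finite iff `∫ z⁻² dσ < ∞`. -/
theorem Msig_log_moment
    {E : Type*} [NormedAddCommGroup E] [NormedSpace ℝ E] [CompleteSpace E]
    [MeasurableSpace E] [BorelSpace E] [SecondCountableTopology E]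
    (σ : Measure (E × ℝ)) [IsFiniteMeasure σ]
    (hσ : σ {p : E × ℝ | ‖p.1‖ = 1 ∧ p.2 ∈ Set.Ioo (0:ℝ) 2}ᶜ = 0) :
    ∫⁻ x in {x : E | 1 < ‖x‖}, ENNReal.ofReal (Real.log ‖x‖) ∂(Msig σ)
      = ∫⁻ p, ENNReal.ofReal ((p.2 ^ 2)⁻¹) ∂σ := by
  classical
  set ν : ℝ → Measure ℝ := fun z =>
    (volume.restrict (Set.Ioi (0:ℝ))).withDensity (fun w => ENNReal.ofReal (w ^ (-(z + 1))))
    with hν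
  set κ : E × ℝ → Measure E := fun p => Measure.map (fun w : ℝ => w • p.1) (ν p.2) with hκdef
  have hsmul : ∀ p : E × ℝ, Measurable (fun w : ℝ => w • p.1) :=
    fun p => (continuous_id.smul continuous_const).measurable
  have hsopen : MeasurableSet {x : E | 1 < ‖x‖} :=
    (isOpen_lt continuous_const continuous_norm).measurableSet
  set f : E → ℝ≥0∞ :=
    fun x => ({x : E | 1 < ‖x‖}).indicator (fun x => ENNReal.ofReal (Real.log ‖x‖)) x with hfdef
  have hfmeas : Measurable f :=
    (measurable_norm.log.ennreal_ofReal).indicator hsopen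
  -- measurability of the kernel
  have hκ : Measurable κ := by
    apply Measure.measurable_of_measurable_coe
    intro s hs
    have hF : Measurable (fun q : (E × ℝ) × ℝ =>
        ({q : (E × ℝ) × ℝ | 0 < q.2}).indicator
          (fun q => ENNReal.ofReal (q.2 ^ (-(q.1.2 + 1)))
            * Set.indicator s (fun _ => (1:ℝ≥0∞)) (q.2 • q.1.1)) q) := by
      apply Measurable.indicator
      · exact (measurable_snd.pow ((measurable_fst.snd.add measurable_const).neg)).ennreal_ofReal.mul
          ((measurable_one.indicator hs).comp
            ((continuous_snd.smul (continuous_fst.fst)).measurable))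
      · exact measurable_snd measurableSet_Ioi
    have heq : ∀ p : E × ℝ, κ p s
        = ∫⁻ w, ({q : (E × ℝ) × ℝ | 0 < q.2}).indicator
          (fun q => ENNReal.ofReal (q.2 ^ (-(q.1.2 + 1)))
            * Set.indicator s (fun _ => (1:ℝ≥0∞)) (q.2 • q.1.1)) (p, w) ∂volume := by
      intro p
      have ht : MeasurableSet ((fun w : ℝ => w • p.1) ⁻¹' s) := (hsmul p) hs
      rw [hκdef]
      simp only
      rw [Measure.map_apply (hsmul p) hs, hν]
      simp only
      rw [withDensity_apply _ ht, Measure.restrict_restrict ht,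
        ← lintegral_indicator (ht.inter measurableSet_Ioi) _]
      congr 1
      ext w
      by_cases h0 : (0:ℝ) < w <;> by_cases h1 : w • p.1 ∈ s <;>
        simp [Set.indicator_apply, h0, h1, Set.mem_Ioi]
    simp only [heq]
    exact hF.lintegral_prod_right'
  -- the inner integral for good p
  have hA : ∀ᵐ p ∂σ, ‖p.1‖ = 1 ∧ p.2 ∈ Set.Ioo (0:ℝ) 2 := by
    rw [Filter.eventually_iff, mem_ae_iff]
    exact hσ
  have hinner : ∀ p : E × ℝ, ‖p.1‖ = 1 ∧ p.2 ∈ Set.Ioo (0:ℝ) 2 →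
      ∫⁻ x, f x ∂(κ p) = ENNReal.ofReal ((p.2 ^ 2)⁻¹) := by
    rintro p ⟨hu, hz⟩
    rw [hκdef]
    simp only
    rw [lintegral_map hfmeas (hsmul p), hν]
    simp only
    have hd : Measurable (fun w : ℝ => ENNReal.ofReal (w ^ (-(p.2 + 1)))) :=
      (measurable_id.pow measurable_const).ennreal_ofReal
    have hg : Measurable (fun w : ℝ => f (w • p.1)) := hfmeas.comp (hsmul p)
    rw [lintegral_withDensity_eq_lintegral_mul _ hd hg]
    have hptwise : ∀ w ∈ Set.Ioi (0:ℝ),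
        (fun w => ENNReal.ofReal (w ^ (-(p.2 + 1))) * f (w • p.1)) w
          = (Set.Ioi (1:ℝ)).indicator
              (fun w => ENNReal.ofReal (Real.log w * w ^ (-(p.2 + 1)))) w := by
      intro w hw
      have hnorm : ‖w • p.1‖ = w := by
        rw [norm_smul, hu, mul_one, Real.norm_eq_abs, abs_of_pos hw]
      simp only [hfdef, Set.indicator_apply, Set.mem_setOf_eq, hnorm, Set.mem_Ioi]
      by_cases h1 : 1 < w
      · simp only [if_pos h1]
        rw [← ENNReal.ofReal_mul (Real.rpow_nonneg hw.le _), mul_comm]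
      · simp [if_neg h1]
    calc ∫⁻ w in Set.Ioi (0:ℝ), ENNReal.ofReal (w ^ (-(p.2 + 1))) * f (w • p.1)
        = ∫⁻ w in Set.Ioi (0:ℝ), (Set.Ioi (1:ℝ)).indicator
            (fun w => ENNReal.ofReal (Real.log w * w ^ (-(p.2 + 1)))) w := by
          exact setLIntegral_congr_fun measurableSet_Ioi hptwise
      _ = ∫⁻ w in Set.Ioi (1:ℝ), ENNReal.ofReal (Real.log w * w ^ (-(p.2 + 1))) := by
          rw [lintegral_indicator measurableSet_Ioi, Measure.restrict_restrict measurableSet_Ioi]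
          have hI : Set.Ioi (1:ℝ) ∩ Set.Ioi 0 = Set.Ioi 1 :=
            Set.inter_eq_left.mpr (fun x hx => Set.mem_Ioi.mpr (lt_trans one_pos (Set.mem_Ioi.mp hx)))
          rw [hI]
      _ = ENNReal.ofReal ((p.2 ^ 2)⁻¹) := aux_lintegral hz.1
  -- put it together
  have hbind : Msig σ = σ.bind κ := rfl
  rw [hbind, ← lintegral_indicator hsopen, Measure.lintegral_bind hκ.aemeasurable hfmeas.aemeasurable]
  exact lintegral_congr_ae (hA.mono hinner)
end
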